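/- arXiv:1508.03679 — 7 statements merged into one kernel-verified Lean document; each statement's English description precedes it below -/
import Mathlib

section
/- The function g^(mid) from [-1,1]^n to [-1,1] is 4-stable: for every t ∈ [-1,1]^n, every α ∈ (0,1], and every α-light distribution D over subsets of [n], E_{R∼D}[min{g^(mid)(t') : t' ⊳_R t}] ≥ g^(mid)(t) − 4α. -/
open Finset

/-- The solid hypercube `[-1,1]^n`. -/
def cube (n : ℕ) : Set (Fin n → ℝ) := {t | ∀ i, t i ∈ Set.Icc (-1 : ℝ) 1}

/-- The solid hypercube `[0,1]^n`. -/
def cube01 (n : ℕ) : Set (Fin n → ℝ) := {t | ∀ i, t i ∈ Set.Icc (0 : ℝ) 1}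

/-- `D` is a probability distribution over subsets of `[n]`. -/
def IsDist {n : ℕ} (D : Finset (Fin n) → ℝ) : Prop :=
  (∀ R, 0 ≤ D R) ∧ ∑ R : Finset (Fin n), D R = 1

/-- `D` is `α`-light: each coordinate is corrupted with (marginal) probability at most `α`. -/
def IsLight {n : ℕ} (D : Finset (Fin n) → ℝ) (α : ℝ) : Prop :=
  ∀ i : Fin n, ∑ R ∈ Finset.univ.filter (fun R => i ∈ R), D R ≤ α

/-- `min { g t' : t' ∈ K, t' ⊳_R t }`, the worst-case corruption of `t` on `R` within `K`. -/
noncomputable def corruptMin {n : ℕ} (K : Set (Fin n → ℝ)) (g : (Fin n → ℝ) → ℝ)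
    (R : Finset (Fin n)) (t : Fin n → ℝ) : ℝ :=
  sInf (g '' {t' ∈ K | ∀ i ∉ R, t' i = t i})

/-- `g : K → ℝ` is `β`-(noise-)stable. -/
def Stable {n : ℕ} (K : Set (Fin n → ℝ)) (g : (Fin n → ℝ) → ℝ) (β : ℝ) : Prop :=
  ∀ t ∈ K, ∀ α : ℝ, α ∈ Set.Ioc (0 : ℝ) 1 →
    ∀ D : Finset (Fin n) → ℝ, IsDist D → IsLight D α →
      g t - α * β ≤ ∑ R : Finset (Fin n), D R * corruptMin K g R t

/-- `g` is `c`-Lipschitz on `K` with respect to the `L^∞` norm. -/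
def LipschitzLinf {n : ℕ} (K : Set (Fin n → ℝ)) (g : (Fin n → ℝ) → ℝ) (c : ℝ) : Prop :=
  ∀ t ∈ K, ∀ t' ∈ K, ∀ d : ℝ, 0 ≤ d → (∀ i, |t i - t' i| ≤ d) → |g t - g t'| ≤ c * d

/-- The `i`-th largest entry of `t` (1-indexed): `t_[i]`. -/
noncomputable def kthLargest {n : ℕ} (t : Fin n → ℝ) (i : ℕ) : ℝ :=
  ((List.ofFn t).insertionSort (· ≥ ·)).getD (i - 1) 0

/-- `g^(mid)`: the average of all entries except the top and bottom quartiles. -/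
noncomputable def gmid {n : ℕ} (t : Fin n → ℝ) : ℝ :=
  ((((3 * n + 3) / 4 - n / 4 : ℕ) : ℝ))⁻¹ *
    ∑ i ∈ Finset.Icc (n / 4 + 1) ((3 * n + 3) / 4), kthLargest t i

section Aux

theorem countP_ofFn (p : ℝ → Prop) [DecidablePred p] (n : ℕ) (t : Fin n → ℝ) :
    (List.ofFn t).countP (fun x => decide (p x)) = (Finset.univ.filter (fun i => p (t i))).card := by
  induction n with
  | zero => simp
  | succ m ih =>
    rw [List.ofFn_succ, List.countP_cons, ih, Fin.card_filter_univ_succ (p := fun i => p (t i))]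
    by_cases h : p (t 0) <;> simp [h]

variable {n : ℕ}

theorem sl_length (t : Fin n → ℝ) : ((List.ofFn t).insertionSort (· ≥ ·)).length = n := by
  rw [List.length_insertionSort, List.length_ofFn]

theorem sl_countP (t : Fin n → ℝ) (v : ℝ) :
    ((List.ofFn t).insertionSort (· ≥ ·)).countP (fun x => decide (v ≤ x))
      = (Finset.univ.filter (fun i => v ≤ t i)).card := by
  rw [(List.perm_insertionSort _ _).countP_eq, countP_ofFn]

theorem le_kth_iff (t : Fin n → ℝ) (v : ℝ) (j : ℕ) (h1 : 1 ≤ j) (h2 : j ≤ n) :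
    v ≤ kthLargest t j ↔ j ≤ (Finset.univ.filter (fun i => v ≤ t i)).card := by
  set l := (List.ofFn t).insertionSort (· ≥ ·) with hl
  have hlen : l.length = n := sl_length t
  have hsort : l.Pairwise (· ≥ ·) := List.pairwise_insertionSort _ _
  have hj : j - 1 < l.length := by omega
  have hget : kthLargest t j = l.get ⟨j - 1, hj⟩ := by
    rw [kthLargest, ← hl, List.getD_eq_getElem _ _ hj]; rfl
  rw [← sl_countP t v, ← hl]
  constructor
  · intro hv
    rw [hget] at hv
    calc j = (l.take j).countP (fun x => decide (v ≤ x)) := by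
            rw [List.countP_eq_length.mpr, List.length_take]
            · omega
            · intro a ha
              rw [List.mem_iff_getElem] at ha
              obtain ⟨i, hi, rfl⟩ := ha
              have hi' : i < j := by rw [List.length_take] at hi; omega
              rw [List.getElem_take]
              have hil : i < l.length := by omega
              have : l.get ⟨j-1, hj⟩ ≤ l.get ⟨i, hil⟩ := by
                rcases eq_or_lt_of_le (show i ≤ j - 1 by omega) with h | h
                · simp [Fin.ext_iff, h]
                · exact hsort.rel_get_of_lt h
              simpa using le_trans hv this
      _ ≤ l.countP (fun x => decide (v ≤ x)) := by
            conv_rhs => rw [← List.take_append_drop j l]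
            rw [List.countP_append]; omega
  · intro hc
    by_contra hv
    push_neg at hv
    rw [hget] at hv
    have : l.countP (fun x => decide (v ≤ x)) ≤ j - 1 := by
      conv_lhs => rw [← List.take_append_drop (j-1) l]
      rw [List.countP_append]
      have h0 : (l.drop (j-1)).countP (fun x => decide (v ≤ x)) = 0 := by
        rw [List.countP_eq_zero]
        intro a ha
        rw [List.mem_iff_getElem] at ha
        obtain ⟨i, hi, rfl⟩ := ha
        rw [List.getElem_drop]
        have hil : j - 1 + i < l.length := by
          rw [List.length_drop] at hi; omega
        have : l.get ⟨j-1+i, hil⟩ ≤ l.get ⟨j-1, hj⟩ := by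
          rcases Nat.eq_zero_or_pos i with h | h
          · simp [Fin.ext_iff, h]
          · exact hsort.rel_get_of_lt (by simp; omega)
        simp only [decide_eq_true_eq]
        intro hva
        exact absurd (le_trans hva this) (not_le.mpr hv)
      have h1' : (l.take (j-1)).countP (fun x => decide (v ≤ x)) ≤ j - 1 := by
        calc _ ≤ (l.take (j-1)).length := List.countP_le_length
          _ ≤ j - 1 := by simp [List.length_take]
      omega
    omega

theorem kth_mem_Icc (t : Fin n → ℝ) (ht : t ∈ cube n) (j : ℕ) (h1 : 1 ≤ j) (h2 : j ≤ n) :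
    kthLargest t j ∈ Set.Icc (-1 : ℝ) 1 := by
  have hj : j - 1 < ((List.ofFn t).insertionSort (· ≥ ·)).length := by rw [sl_length]; omega
  have : kthLargest t j ∈ (List.ofFn t).insertionSort (· ≥ ·) := by
    rw [kthLargest, List.getD_eq_getElem _ _ hj]
    exact List.getElem_mem hj
  rw [(List.perm_insertionSort _ _).mem_iff, List.mem_ofFn] at this
  obtain ⟨i, hi⟩ := this
  exact hi ▸ ht i

theorem kth_shift (t t' : Fin n → ℝ) (R : Finset (Fin n)) (hR : ∀ i ∉ R, t' i = t i)
    (i : ℕ) (h1 : 1 ≤ i) (h2 : i + R.card ≤ n) :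
    kthLargest t (i + R.card) ≤ kthLargest t' i := by
  set v := kthLargest t (i + R.card) with hv
  have hA : i + R.card ≤ (Finset.univ.filter (fun idx => v ≤ t idx)).card :=
    (le_kth_iff t v (i + R.card) (by omega) h2).mp le_rfl
  rw [le_kth_iff t' v i h1 (by omega)]
  have hsub : (Finset.univ.filter (fun idx => v ≤ t idx)) \ R
      ⊆ (Finset.univ.filter (fun idx => v ≤ t' idx)) := by
    intro idx hidx
    simp only [Finset.mem_sdiff, Finset.mem_filter, Finset.mem_univ, true_and] at *
    rw [hR idx hidx.2]; exact hidx.1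
  calc i ≤ (Finset.univ.filter (fun idx => v ≤ t idx)).card - R.card := by omega
    _ ≤ ((Finset.univ.filter (fun idx => v ≤ t idx)) \ R).card := Finset.le_card_sdiff _ _
    _ ≤ _ := Finset.card_le_card hsub

theorem gmid_change (t t' : Fin n → ℝ) (ht : t ∈ cube n) (ht' : t' ∈ cube n)
    (R : Finset (Fin n)) (hR : ∀ i ∉ R, t' i = t i) :
    gmid t - 4 * R.card / n ≤ gmid t' := by
  rcases Nat.eq_zero_or_pos n with hn | hn
  · subst hn
    have : R.card = 0 := by simp [Finset.card_eq_zero, Finset.eq_empty_of_isEmpty]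
    norm_num [gmid, this]
  set a := n / 4 with ha
  set b := (3 * n + 3) / 4 with hb
  set m := b - a with hm
  set k := R.card with hk
  have hkn : k ≤ n := by rw [hk]; simpa using Finset.card_le_card (Finset.subset_univ R)
  have hab : a + 1 ≤ b := by omega
  have hbn : b ≤ n := by omega
  have hm1 : 1 ≤ m := by omega
  have hn2m : n ≤ 2 * m := by omega
  set f : ℕ → ℝ := fun j => if j ≤ n then kthLargest t j else -1 with hf
  have hfb : ∀ j, 1 ≤ j → -1 ≤ f j ∧ f j ≤ 1 := by
    intro j hj
    by_cases h : j ≤ n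
    · have := kth_mem_Icc t ht j hj h
      simp only [hf, if_pos h]
      exact ⟨this.1, this.2⟩
    · simp [hf, if_neg h]
  -- step
  have hstep : ∀ c : ℕ, (∑ i ∈ Finset.Icc (a+1) b, f (i + c)) - 2
      ≤ ∑ i ∈ Finset.Icc (a+1) b, f (i + (c+1)) := by
    intro c
    have e1 : ∑ i ∈ Finset.Icc (a+1) b, f (i + c)
        = ∑ i ∈ Finset.range m, (fun i => f (a + 1 + c + i)) i := by
      rw [← Finset.Ico_add_one_right_eq_Icc, Finset.sum_Ico_eq_sum_range]
      have : b + 1 - (a + 1) = m := by omega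
      rw [this]
      refine Finset.sum_congr rfl (fun i _ => ?_)
      congr 1
      omega
    have e2 : ∑ i ∈ Finset.Icc (a+1) b, f (i + (c+1))
        = ∑ i ∈ Finset.range m, (fun i => f (a + 1 + c + i)) (i + 1) := by
      rw [← Finset.Ico_add_one_right_eq_Icc, Finset.sum_Ico_eq_sum_range]
      have : b + 1 - (a + 1) = m := by omega
      rw [this]
      refine Finset.sum_congr rfl (fun i _ => ?_)
      congr 1
      omega
    have htel : ∑ i ∈ Finset.range m,
        ((fun i => f (a + 1 + c + i)) i - (fun i => f (a + 1 + c + i)) (i + 1))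
        = f (a + 1 + c + 0) - f (a + 1 + c + m) := Finset.sum_range_sub' _ m
    rw [Finset.sum_sub_distrib] at htel
    have h1 := hfb (a + 1 + c + 0) (by omega)
    have h2 := hfb (a + 1 + c + m) (by omega)
    rw [e1, e2]
    linarith [htel]
  have hiter : ∀ c : ℕ, (∑ i ∈ Finset.Icc (a+1) b, f i) - 2 * c
      ≤ ∑ i ∈ Finset.Icc (a+1) b, f (i + c) := by
    intro c
    induction c with
    | zero => simp
    | succ d ih =>
      have := hstep d
      push_cast
      push_cast at ih
      linarith
  have hpt : ∑ i ∈ Finset.Icc (a+1) b, f (i + k)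
      ≤ ∑ i ∈ Finset.Icc (a+1) b, kthLargest t' i := by
    apply Finset.sum_le_sum
    intro i hi
    rw [Finset.mem_Icc] at hi
    by_cases h : i + k ≤ n
    · rw [hf]
      simp only [if_pos h]
      exact kth_shift t t' R hR i (by omega) h
    · rw [hf]
      simp only [if_neg h]
      exact (kth_mem_Icc t' ht' i (by omega) (by omega)).1
  have hft : ∑ i ∈ Finset.Icc (a+1) b, f i = ∑ i ∈ Finset.Icc (a+1) b, kthLargest t i := by
    apply Finset.sum_congr rfl
    intro i hi
    rw [Finset.mem_Icc] at hi
    rw [hf]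
    simp [if_pos (by omega : i ≤ n)]
  have hsum : (∑ i ∈ Finset.Icc (a+1) b, kthLargest t i) - 2 * k
      ≤ ∑ i ∈ Finset.Icc (a+1) b, kthLargest t' i := by
    have := hiter k
    rw [hft] at this
    linarith [hpt]
  have hmpos : (0:ℝ) < (m:ℝ) := by exact_mod_cast hm1
  have hnpos : (0:ℝ) < (n:ℝ) := by exact_mod_cast hn
  have hcoef : (0:ℝ) ≤ ((m:ℕ):ℝ)⁻¹ := by positivity
  have hdiv : ((m:ℕ):ℝ)⁻¹ * (2 * k) ≤ 4 * k / n := by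
    rw [inv_mul_eq_div, div_le_div_iff₀ hmpos hnpos]
    have : (n:ℝ) ≤ 2 * m := by exact_mod_cast hn2m
    have hk0 : (0:ℝ) ≤ (k:ℝ) := by positivity
    nlinarith
  have hmain : ((m:ℕ):ℝ)⁻¹ * ((∑ i ∈ Finset.Icc (a+1) b, kthLargest t i) - 2 * k)
      ≤ ((m:ℕ):ℝ)⁻¹ * ∑ i ∈ Finset.Icc (a+1) b, kthLargest t' i :=
    mul_le_mul_of_nonneg_left hsum hcoef
  rw [mul_sub] at hmain
  rw [gmid, gmid]
  rw [← ha, ← hb, ← hm]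
  linarith [hdiv, hmain]

theorem corruptMin_ge (t : Fin n → ℝ) (ht : t ∈ cube n) (R : Finset (Fin n)) :
    gmid t - 4 * R.card / n ≤ corruptMin (cube n) gmid R t := by
  apply le_csInf
  · exact ⟨gmid t, ⟨t, ⟨ht, fun i _ => rfl⟩, rfl⟩⟩
  · rintro x ⟨t', ⟨ht', hRt'⟩, rfl⟩
    exact gmid_change t t' ht ht' R hRt'

end Aux

/-- `g^(mid)` is 4-stable. -/
theorem gmid_stable {n : ℕ} : Stable (cube n) (gmid (n := n)) 4 := by
  intro t ht α hα D hD hL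
  have hDpos := hD.1
  have step1 : ∑ R : Finset (Fin n), D R * (gmid t - 4 * R.card / n)
      ≤ ∑ R : Finset (Fin n), D R * corruptMin (cube n) gmid R t :=
    Finset.sum_le_sum (fun R _ =>
      mul_le_mul_of_nonneg_left (corruptMin_ge t ht R) (hDpos R))
  have hsplit : ∑ R : Finset (Fin n), D R * (gmid t - 4 * R.card / n)
      = gmid t - (4 / n) * ∑ R : Finset (Fin n), D R * R.card := by
    calc ∑ R : Finset (Fin n), D R * (gmid t - 4 * ↑R.card / ↑n)
        = ∑ R : Finset (Fin n), (D R * gmid t - 4 / n * (D R * R.card)) := by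
          refine Finset.sum_congr rfl (fun R _ => by ring)
      _ = _ := by
          rw [Finset.sum_sub_distrib, ← Finset.sum_mul, hD.2, one_mul, ← Finset.mul_sum]
  have hcount : ∑ R : Finset (Fin n), D R * R.card ≤ (n:ℝ) * α := by
    have e : ∀ R : Finset (Fin n), D R * R.card
        = ∑ i : Fin n, (if i ∈ R then D R else 0) := by
      intro R
      rw [Finset.sum_ite_mem, Finset.univ_inter, Finset.sum_const, nsmul_eq_mul]
      ring
    calc ∑ R : Finset (Fin n), D R * R.card
        = ∑ R : Finset (Fin n), ∑ i : Fin n, (if i ∈ R then D R else 0) :=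
          Finset.sum_congr rfl (fun R _ => e R)
      _ = ∑ i : Fin n, ∑ R ∈ Finset.univ.filter (fun R => i ∈ R), D R := by
          rw [Finset.sum_comm]
          exact Finset.sum_congr rfl (fun i _ => (Finset.sum_filter _ _).symm)
      _ ≤ ∑ _i : Fin n, α := Finset.sum_le_sum (fun i _ => hL i)
      _ = (n:ℝ) * α := by rw [Finset.sum_const, nsmul_eq_mul]; simp
  have hlast : (4 / (n:ℝ)) * ∑ R : Finset (Fin n), D R * R.card ≤ α * 4 := by
    rcases Nat.eq_zero_or_pos n with hn | hn
    · subst hn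
      simp only [Nat.cast_zero, div_zero, zero_mul]
      nlinarith [hα.1]
    · have hnpos : (0:ℝ) < (n:ℝ) := by exact_mod_cast hn
      have h2 : (4 / (n:ℝ)) * ∑ R : Finset (Fin n), D R * R.card
          ≤ (4 / (n:ℝ)) * ((n:ℝ) * α) :=
        mul_le_mul_of_nonneg_left hcount (by positivity)
      calc (4 / (n:ℝ)) * ∑ R : Finset (Fin n), D R * R.card
          ≤ (4 / (n:ℝ)) * ((n:ℝ) * α) := h2
        _ = α * 4 := by field_simp
  linarith [step1, hsplit ▸ step1]
end

section
/- Let g : [-1,1]^n → [-1,1] be β-stable and c-Lipschitz in L∞, let A be an n × m matrix with entries in [-1,1], let α, δ > 0, and let s ≥ 2 ln(2/α)/δ² be an integer. Fix x ∈ Δ_m and let x̃ be the empirical distribution of s i.i.d. samples from x (so x̃ = (1/s)Σ_{i=1}^s e_{k_i} with k_i ∼ x i.i.d.). Then E[g(A x̃)] ≥ g(A x) − αβ − cδ. -/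
open Finset

lemma hoeffding_fin {m : ℕ} (x y : Fin m → ℝ) (hx0 : ∀ j, 0 ≤ x j)
    (hx1 : ∑ j, x j = 1) (hy : ∀ j, |y j| ≤ 1) (lam : ℝ) :
    ∑ j, x j * Real.exp (lam * (y j - ∑ j', x j' * y j')) ≤ Real.exp (lam ^ 2 / 2) := by
  set μ : ℝ := ∑ j', x j' * y j' with hμ
  set F : ℝ → ℝ := fun l => ∑ j, x j * Real.exp (l * y j) with hFdef
  set G : ℝ → ℝ := fun l => ∑ j, x j * (Real.exp (l * y j) * y j) with hGdef
  set H : ℝ → ℝ := fun l => ∑ j, x j * (Real.exp (l * y j) * y j * y j) with hHdef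
  have hFpos : ∀ l, 0 < F l := by
    intro l
    have hex : ∃ j : Fin m, 0 < x j := by
      by_contra h
      push_neg at h
      have : ∀ j : Fin m, x j = 0 := fun j => le_antisymm (h j) (hx0 j)
      simp [this] at hx1
    obtain ⟨j0, hj0⟩ := hex
    refine Finset.sum_pos' (fun j _ => mul_nonneg (hx0 j) (Real.exp_pos _).le) ?_
    exact ⟨j0, Finset.mem_univ _, mul_pos hj0 (Real.exp_pos _)⟩
  have hF : ∀ l, HasDerivAt F (G l) l := by
    intro l
    apply HasDerivAt.fun_sum
    intro j _
    exact ((hasDerivAt_mul_const (y j)).exp).const_mul (x j)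
  have hG : ∀ l, HasDerivAt G (H l) l := by
    intro l
    apply HasDerivAt.fun_sum
    intro j _
    exact (((hasDerivAt_mul_const (y j)).exp).mul_const (y j)).const_mul (x j)
  set φ : ℝ → ℝ := fun l => l ^ 2 / 2 + l * μ - Real.log (F l) with hφdef
  set φ' : ℝ → ℝ := fun l => l + μ - G l / F l with hφ'def
  have hφd : ∀ l, HasDerivAt φ (φ' l) l := by
    intro l
    have h1 : HasDerivAt (fun l : ℝ => l ^ 2 / 2 + l * μ) (l + μ) l := by
      have := ((hasDerivAt_pow 2 l).div_const 2).add ((hasDerivAt_id l).mul_const μ)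
      refine this.congr_deriv ?_
      ring
    have h2 : HasDerivAt (fun l => Real.log (F l)) (G l / F l) l :=
      (hF l).log (hFpos l).ne'
    exact h1.sub h2
  have hφ'd : ∀ l, HasDerivAt φ' (1 - (H l * F l - G l * G l) / (F l) ^ 2) l := by
    intro l
    have h1 : HasDerivAt (fun l : ℝ => l + μ) 1 l := (hasDerivAt_id l).add_const μ
    exact h1.sub ((hG l).div (hF l) (hFpos l).ne')
  have hHF : ∀ l, H l ≤ F l := by
    intro l
    apply Finset.sum_le_sum
    intro j _
    apply mul_le_mul_of_nonneg_left _ (hx0 j)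
    have hy2 : y j * y j ≤ 1 := by
      have := abs_le.mp (hy j)
      nlinarith [this.1, this.2]
    calc Real.exp (l * y j) * y j * y j = Real.exp (l * y j) * (y j * y j) := by ring
      _ ≤ Real.exp (l * y j) * 1 := by
          exact mul_le_mul_of_nonneg_left hy2 (Real.exp_pos _).le
      _ = Real.exp (l * y j) := mul_one _
  have hsecond : ∀ l, 0 ≤ 1 - (H l * F l - G l * G l) / (F l) ^ 2 := by
    intro l
    have hF2 : (0:ℝ) < (F l) ^ 2 := pow_pos (hFpos l) 2
    have : (H l * F l - G l * G l) / (F l) ^ 2 ≤ 1 := by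
      rw [div_le_one hF2]
      nlinarith [hHF l, (hFpos l).le, sq_nonneg (G l), mul_le_mul_of_nonneg_right (hHF l) (hFpos l).le]
    linarith
  have hφ'mono : Monotone φ' := by
    apply monotone_of_deriv_nonneg
    · exact fun l => (hφ'd l).differentiableAt
    · intro l
      rw [(hφ'd l).deriv]
      exact hsecond l
  have hF0 : F 0 = 1 := by simp [hFdef, hx1]
  have hG0 : G 0 = μ := by simp [hGdef, hμ]
  have hφ'0 : φ' 0 = 0 := by simp [hφ'def, hF0, hG0]
  have hφ0 : φ 0 = 0 := by simp [hφdef, hF0]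
  have hφnonneg : ∀ l, 0 ≤ φ l := by
    intro l
    have hdiff : Differentiable ℝ φ := fun l => (hφd l).differentiableAt
    rcases le_total 0 l with hl | hl
    · have hmono : MonotoneOn φ (Set.Ici (0:ℝ)) := by
        apply monotoneOn_of_deriv_nonneg (convex_Ici 0) hdiff.continuous.continuousOn
          (hdiff.differentiableOn)
        intro u hu
        rw [interior_Ici] at hu
        rw [(hφd u).deriv]
        rw [← hφ'0]
        exact hφ'mono (le_of_lt hu)
      have := hmono (Set.self_mem_Ici) (Set.mem_Ici.mpr hl) hl
      linarith [hφ0 ▸ this]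
    · have hanti : AntitoneOn φ (Set.Iic (0:ℝ)) := by
        apply antitoneOn_of_deriv_nonpos (convex_Iic 0) hdiff.continuous.continuousOn
          (hdiff.differentiableOn)
        intro u hu
        rw [interior_Iic] at hu
        rw [(hφd u).deriv]
        rw [← hφ'0]
        exact hφ'mono (le_of_lt hu)
      have := hanti (Set.mem_Iic.mpr hl) (Set.self_mem_Iic) hl
      linarith [hφ0 ▸ this]
  -- conclude
  have hlog : Real.log (F lam) ≤ lam ^ 2 / 2 + lam * μ := by
    have := hφnonneg lam
    simp only [hφdef] at this
    linarith
  have hFle : F lam ≤ Real.exp (lam ^ 2 / 2 + lam * μ) := by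
    rw [← Real.exp_log (hFpos lam)]
    exact Real.exp_le_exp.mpr hlog
  have hLHS : ∑ j, x j * Real.exp (lam * (y j - μ)) = Real.exp (-(lam * μ)) * F lam := by
    rw [hFdef, Finset.mul_sum]
    apply Finset.sum_congr rfl
    intro j _
    rw [show lam * (y j - μ) = -(lam * μ) + lam * y j by ring, Real.exp_add]
    ring
  rw [hLHS]
  calc Real.exp (-(lam * μ)) * F lam ≤ Real.exp (-(lam * μ)) * Real.exp (lam ^ 2 / 2 + lam * μ) :=
        mul_le_mul_of_nonneg_left hFle (Real.exp_pos _).le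
    _ = Real.exp (lam ^ 2 / 2) := by rw [← Real.exp_add]; ring_nf

lemma chernoff_fin{m : ℕ} (s : ℕ) (x y : Fin m → ℝ) (hx0 : ∀ j, 0 ≤ x j)
    (hx1 : ∑ j, x j = 1) (hy : ∀ j, |y j| ≤ 1) (δ : ℝ) (hδ : 0 < δ) :
    ∑ k ∈ Finset.univ.filter
        (fun k : Fin s → Fin m => (s : ℝ) * δ ≤ (∑ l, y (k l)) - s * (∑ j, x j * y j)),
      ∏ i, x (k i) ≤ Real.exp (-(s * δ ^ 2) / 2) := by
  set μ : ℝ := ∑ j, x j * y j with hμ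
  have hprodnn : ∀ k : Fin s → Fin m, 0 ≤ ∏ i, x (k i) := fun k =>
    Finset.prod_nonneg fun i _ => hx0 (k i)
  have hexp : ∀ k : Fin s → Fin m,
      (∑ l : Fin s, δ * (y (k l) - μ)) = δ * ((∑ l, y (k l)) - s * μ) := by
    intro k
    rw [← Finset.mul_sum, Finset.sum_sub_distrib, Finset.sum_const, Finset.card_univ,
      Fintype.card_fin, nsmul_eq_mul]
  have key : ∀ k : Fin s → Fin m,
      (∏ i, x (k i)) * Real.exp (δ * ((∑ l, y (k l)) - s * μ))
        = ∏ l, (x (k l) * Real.exp (δ * (y (k l) - μ))) := by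
    intro k
    rw [Finset.prod_mul_distrib, ← Real.exp_sum, hexp k]
  calc ∑ k ∈ Finset.univ.filter
        (fun k : Fin s → Fin m => (s : ℝ) * δ ≤ (∑ l, y (k l)) - s * μ), ∏ i, x (k i)
      ≤ ∑ k ∈ Finset.univ.filter
        (fun k : Fin s → Fin m => (s : ℝ) * δ ≤ (∑ l, y (k l)) - s * μ),
          (∏ i, x (k i)) * Real.exp (δ * ((∑ l, y (k l)) - s * μ - s * δ)) := by
        apply Finset.sum_le_sum
        intro k hk
        rw [Finset.mem_filter] at hk
        apply le_mul_of_one_le_right (hprodnn k)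
        apply Real.one_le_exp
        have := hk.2
        nlinarith
    _ ≤ ∑ k : Fin s → Fin m,
          (∏ i, x (k i)) * Real.exp (δ * ((∑ l, y (k l)) - s * μ - s * δ)) := by
        apply Finset.sum_le_sum_of_subset_of_nonneg (Finset.filter_subset _ _)
        intro k _ _
        exact mul_nonneg (hprodnn k) (Real.exp_pos _).le
    _ = Real.exp (-(s * δ * δ)) * ∑ k : Fin s → Fin m,
          ∏ l, (x (k l) * Real.exp (δ * (y (k l) - μ))) := by
        conv_rhs => rw [Finset.mul_sum]
        apply Finset.sum_congr rfl
        intro k _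
        rw [← key k]
        rw [show δ * ((∑ l, y (k l)) - s * μ - s * δ)
            = -(s * δ * δ) + δ * ((∑ l, y (k l)) - s * μ) by ring, Real.exp_add]
        ring
    _ = Real.exp (-(s * δ * δ)) * (∑ j, x j * Real.exp (δ * (y j - μ))) ^ s := by
        rw [Fintype.sum_pow]
    _ ≤ Real.exp (-(s * δ * δ)) * (Real.exp (δ ^ 2 / 2)) ^ s := by
        apply mul_le_mul_of_nonneg_left _ (Real.exp_pos _).le
        apply pow_le_pow_left₀ (Finset.sum_nonneg fun j _ =>
          mul_nonneg (hx0 j) (Real.exp_pos _).le)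
        exact hoeffding_fin x y hx0 hx1 hy δ
    _ = Real.exp (-(s * δ ^ 2) / 2) := by
        rw [← Real.exp_nat_mul, ← Real.exp_add]
        congr 1
        ring

lemma beta_nonneg{n : ℕ} (g : (Fin n → ℝ) → ℝ) (β : ℝ)
    (hstable : Stable (cube n) g β) : 0 ≤ β := by
  classical
  have h0cube : (0 : Fin n → ℝ) ∈ cube n := by
    intro i; constructor <;> norm_num
  set D₀ : Finset (Fin n) → ℝ := fun R => if R = (∅ : Finset (Fin n)) then 1 else 0 with hD₀
  have hdist : IsDist D₀ := by
    constructor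
    · intro R; by_cases h : R = ∅ <;> simp [hD₀, h]
    · simp [hD₀]
  have hlight : IsLight D₀ 1 := by
    intro i
    have : ∑ R ∈ Finset.univ.filter (fun R => i ∈ R), D₀ R = 0 := by
      apply Finset.sum_eq_zero
      intro R hR
      rw [Finset.mem_filter] at hR
      exact if_neg (Finset.ne_empty_of_mem hR.2)
    rw [this]; norm_num
  have hcm : corruptMin (cube n) g (∅ : Finset (Fin n)) 0 = g 0 := by
    unfold corruptMin
    have hset : {t' ∈ cube n | ∀ i ∉ (∅ : Finset (Fin n)), t' i = (0 : Fin n → ℝ) i}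
        = {(0 : Fin n → ℝ)} := by
      ext t'
      simp only [Set.mem_setOf_eq, Set.mem_singleton_iff]
      constructor
      · rintro ⟨_, h⟩
        exact funext fun i => h i (Finset.notMem_empty i)
      · rintro rfl
        exact ⟨h0cube, fun i _ => rfl⟩
    rw [hset, Set.image_singleton, csInf_singleton]
  have hsum : ∑ R : Finset (Fin n), D₀ R * corruptMin (cube n) g R 0
      = corruptMin (cube n) g (∅ : Finset (Fin n)) 0 := by
    rw [Finset.sum_eq_single (∅ : Finset (Fin n))]
    · simp [hD₀]
    · intro R _ hR
      simp [hD₀, hR]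
    · intro h
      exact absurd (Finset.mem_univ _) h
  have := hstable 0 h0cube 1 ⟨one_pos, le_refl 1⟩ D₀ hdist hlight
  rw [hsum, hcm] at this
  linarith

/-- main sampling theorem. If `g` is `β`-stable and `c`-Lipschitz in `L^∞`,
`A` has entries in `[-1,1]`, and `x̃` is the empirical distribution of `s ≥ 2 ln(2/α)/δ²`
i.i.d. samples from `x ∈ Δ_m`, then `E[g(A x̃)] ≥ g(Ax) − αβ − cδ`. -/
theorem mixture_sampling {n m : ℕ} (β c α δ : ℝ) (hα : 0 < α) (hδ : 0 < δ)
    (g : (Fin n → ℝ) → ℝ)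
    (hrange : ∀ t ∈ cube n, g t ∈ Set.Icc (-1 : ℝ) 1)
    (hstable : Stable (cube n) g β)
    (hlip : LipschitzLinf (cube n) g c)
    (A : Matrix (Fin n) (Fin m) ℝ) (hA : ∀ i j, A i j ∈ Set.Icc (-1 : ℝ) 1)
    (s : ℕ) (hs : 2 * Real.log (2 / α) / δ ^ 2 ≤ s)
    (x : Fin m → ℝ) (hx : x ∈ stdSimplex ℝ (Fin m)) :
    g (A.mulVec x) - α * β - c * δ ≤
      ∑ k : Fin s → Fin m, (∏ i, x (k i)) *
        g (A.mulVec fun j => ((Finset.univ.filter fun i => k i = j).card : ℝ) / s) := by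
  classical
  obtain ⟨hx0, hx1⟩ := hx
  have hβ : 0 ≤ β := beta_nonneg g β hstable
  set α' : ℝ := min α 1 with hα'def
  set xt : (Fin s → Fin m) → Fin m → ℝ :=
    fun k j => ((Finset.univ.filter fun i => k i = j).card : ℝ) / s with hxtdef
  set w : (Fin s → Fin m) → ℝ := fun k => ∏ i, x (k i) with hwdef
  have hw0 : ∀ k, 0 ≤ w k := fun k => Finset.prod_nonneg fun i _ => hx0 (k i)
  have hw1 : ∑ k : Fin s → Fin m, w k = 1 := by
    simp only [hwdef]
    rw [← Fintype.sum_pow, hx1, one_pow]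
  have hmv : ∀ (v : Fin m → ℝ) (i : Fin n), A.mulVec v i = ∑ j, A i j * v j :=
    fun v i => rfl
  have hyabs : ∀ i j, |A i j| ≤ 1 := fun i j => abs_le.mpr ⟨(hA i j).1, (hA i j).2⟩
  have hcube : ∀ v : Fin m → ℝ, (∀ j, 0 ≤ v j) → (∑ j, v j ≤ 1) → A.mulVec v ∈ cube n := by
    intro v hv hvs i
    have habs : |A.mulVec v i| ≤ 1 := by
      rw [hmv]
      calc |∑ j, A i j * v j| ≤ ∑ j, |A i j * v j| := Finset.abs_sum_le_sum_abs _ _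
        _ ≤ ∑ j, v j := by
            apply Finset.sum_le_sum
            intro j _
            rw [abs_mul, abs_of_nonneg (hv j)]
            exact mul_le_of_le_one_left (hv j) (hyabs i j)
        _ ≤ 1 := hvs
    exact ⟨(abs_le.mp habs).1, (abs_le.mp habs).2⟩
  have ht : A.mulVec x ∈ cube n := hcube x hx0 hx1.le
  have hxt0 : ∀ k j, 0 ≤ xt k j := by
    intro k j
    simp only [hxtdef]
    positivity
  have hxtsum : ∀ k, ∑ j, xt k j ≤ 1 := by
    intro k
    have h1 : ∑ j, xt k j = (s : ℝ) / s := by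
      simp only [hxtdef]
      rw [← Finset.sum_div]
      congr 1
      rw [← Nat.cast_sum]
      congr 1
      rw [← Finset.card_eq_sum_card_fiberwise (fun i _ => Finset.mem_univ (k i))]
      simp
    rw [h1]
    rcases eq_or_ne s 0 with h | h
    · simp [h]
    · rw [div_self (Nat.cast_ne_zero.mpr h)]
  have htt : ∀ k, A.mulVec (xt k) ∈ cube n := fun k => hcube (xt k) (hxt0 k) (hxtsum k)
  set Rs : (Fin s → Fin m) → Finset (Fin n) :=
    fun k => Finset.univ.filter (fun i => δ < |A.mulVec (xt k) i - A.mulVec x i|) with hRsdef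
  set D : Finset (Fin n) → ℝ :=
    fun R => ∑ k ∈ Finset.univ.filter (fun k => Rs k = R), w k with hDdef
  have hD0 : ∀ R, 0 ≤ D R := fun R => Finset.sum_nonneg fun k _ => hw0 k
  have hDsum : ∑ R : Finset (Fin n), D R = 1 := by
    simp only [hDdef]
    rw [Finset.sum_fiberwise]
    exact hw1
  have hmarg : ∀ i, ∑ R ∈ Finset.univ.filter (fun R => i ∈ R), D R
      = ∑ k ∈ Finset.univ.filter (fun k => i ∈ Rs k), w k := by
    intro i
    simp only [hDdef]
    rw [Finset.sum_fiberwise_eq_sum_filter]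
    apply Finset.sum_congr _ (fun _ _ => rfl)
    apply Finset.filter_congr
    intro k _
    simp
  -- per-coordinate facts
  have hti : ∀ i, A.mulVec x i = ∑ j, x j * A i j := by
    intro i
    rw [hmv]
    exact Finset.sum_congr rfl fun j _ => mul_comm _ _
  have htti : ∀ (k : Fin s → Fin m) (i : Fin n),
      A.mulVec (xt k) i = (∑ l, A i (k l)) / s := by
    intro k i
    rw [hmv]
    have hfib : ∑ l, A i (k l)
        = ∑ j, ((Finset.univ.filter fun l => k l = j).card : ℝ) * A i j := by
      rw [← Finset.sum_fiberwise' Finset.univ k (fun j => A i j)]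
      apply Finset.sum_congr rfl
      intro j _
      rw [Finset.sum_const, nsmul_eq_mul]
    calc ∑ j, A i j * xt k j
        = ∑ j, (((Finset.univ.filter fun l => k l = j).card : ℝ) * A i j) / s := by
          apply Finset.sum_congr rfl
          intro j _
          simp only [hxtdef]
          ring
      _ = (∑ j, ((Finset.univ.filter fun l => k l = j).card : ℝ) * A i j) / s := by
          rw [Finset.sum_div]
      _ = (∑ l, A i (k l)) / s := by rw [hfib]
  -- tail bound
  have hexple : Real.exp (-((s : ℝ) * δ ^ 2) / 2) ≤ α / 2 := by
    have h3 : 2 * Real.log (2 / α) / δ ^ 2 * (δ ^ 2 / 2) = Real.log (2 / α) := by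
      field_simp
    have h2 : Real.log (2 / α) ≤ (s : ℝ) * (δ ^ 2 / 2) := by
      rw [← h3]
      exact mul_le_mul_of_nonneg_right hs (by positivity)
    calc Real.exp (-((s : ℝ) * δ ^ 2) / 2) ≤ Real.exp (-(Real.log (2 / α))) := by
          apply Real.exp_le_exp.mpr
          nlinarith
      _ = α / 2 := by
          rw [Real.exp_neg, Real.exp_log (by positivity), inv_div]
  have htail : ∀ i, ∑ k ∈ Finset.univ.filter (fun k => i ∈ Rs k), w k ≤ α := by
    intro i
    have himp : ∀ k : Fin s → Fin m, (δ < |A.mulVec (xt k) i - A.mulVec x i|) →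
        ((s : ℝ) * δ ≤ (∑ l, A i (k l)) - s * (∑ j, x j * A i j))
        ∨ ((s : ℝ) * δ ≤ (∑ l, -A i (k l)) - s * (∑ j, x j * -A i j)) := by
      intro k hk
      rcases Nat.eq_zero_or_pos s with hs0 | hs0
      · left
        subst hs0
        simp
      · have hspos : (0 : ℝ) < s := Nat.cast_pos.mpr hs0
        rw [htti k i, hti i] at hk
        have hScancel : (∑ l, A i (k l)) / s * s = ∑ l, A i (k l) :=
          div_mul_cancel₀ _ hspos.ne'
        rcases lt_abs.mp hk with h | h
        · left
          nlinarith [mul_lt_mul_of_pos_right h hspos]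
        · right
          have e1 : ∑ l, -A i (k l) = -∑ l, A i (k l) := by
            rw [Finset.sum_neg_distrib]
          have e2 : ∑ j, x j * -A i j = -∑ j, x j * A i j := by
            simp [mul_neg]
          rw [e1, e2]
          nlinarith [mul_lt_mul_of_pos_right h hspos]
    set P := Finset.univ.filter
      (fun k : Fin s → Fin m => (s : ℝ) * δ ≤ (∑ l, A i (k l)) - s * (∑ j, x j * A i j)) with hP
    set Q := Finset.univ.filter
      (fun k : Fin s → Fin m => (s : ℝ) * δ ≤ (∑ l, -A i (k l)) - s * (∑ j, x j * -A i j)) with hQ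
    have hsub : Finset.univ.filter (fun k => i ∈ Rs k) ⊆ P ∪ Q := by
      intro k hk
      rw [Finset.mem_filter] at hk
      have hk2 : δ < |A.mulVec (xt k) i - A.mulVec x i| := by
        have := hk.2
        simp only [hRsdef, Finset.mem_filter, Finset.mem_univ, true_and] at this
        exact this
      rcases himp k hk2 with h | h
      · exact Finset.mem_union_left _ (Finset.mem_filter.mpr ⟨Finset.mem_univ _, h⟩)
      · exact Finset.mem_union_right _ (Finset.mem_filter.mpr ⟨Finset.mem_univ _, h⟩)
    have hPb : ∑ k ∈ P, w k ≤ Real.exp (-((s : ℝ) * δ ^ 2) / 2) := by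
      simp only [hP, hwdef]
      exact chernoff_fin s x (fun j => A i j) hx0 hx1 (fun j => hyabs i j) δ hδ
    have hQb : ∑ k ∈ Q, w k ≤ Real.exp (-((s : ℝ) * δ ^ 2) / 2) := by
      simp only [hQ, hwdef]
      exact chernoff_fin s x (fun j => -A i j) hx0 hx1
        (fun j => by simpa using hyabs i j) δ hδ
    have hPQ : ∑ k ∈ P ∪ Q, w k ≤ ∑ k ∈ P, w k + ∑ k ∈ Q, w k := by
      have h1 := Finset.sum_union_inter (s₁ := P) (s₂ := Q) (f := w)
      have h2 : 0 ≤ ∑ k ∈ P ∩ Q, w k := Finset.sum_nonneg fun k _ => hw0 k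
      linarith
    calc ∑ k ∈ Finset.univ.filter (fun k => i ∈ Rs k), w k
        ≤ ∑ k ∈ P ∪ Q, w k :=
          Finset.sum_le_sum_of_subset_of_nonneg hsub (fun k _ _ => hw0 k)
      _ ≤ ∑ k ∈ P, w k + ∑ k ∈ Q, w k := hPQ
      _ ≤ Real.exp (-((s : ℝ) * δ ^ 2) / 2) + Real.exp (-((s : ℝ) * δ ^ 2) / 2) :=
          add_le_add hPb hQb
      _ ≤ α := by linarith [hexple]
  have hlight : IsLight D α' := by
    intro i
    rw [hmarg i]
    apply le_min (htail i)
    calc ∑ k ∈ Finset.univ.filter (fun k => i ∈ Rs k), w k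
        ≤ ∑ k : Fin s → Fin m, w k :=
          Finset.sum_le_sum_of_subset_of_nonneg (Finset.filter_subset _ _)
            (fun k _ _ => hw0 k)
      _ = 1 := hw1
  have hα'mem : α' ∈ Set.Ioc (0 : ℝ) 1 := ⟨lt_min hα one_pos, min_le_right _ _⟩
  have hst := hstable (A.mulVec x) ht α' hα'mem D ⟨hD0, hDsum⟩ hlight
  have hsum1 : ∑ R : Finset (Fin n), D R * corruptMin (cube n) g R (A.mulVec x)
      = ∑ k : Fin s → Fin m, w k * corruptMin (cube n) g (Rs k) (A.mulVec x) := by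
    rw [← Finset.sum_fiberwise Finset.univ Rs
      (fun k => w k * corruptMin (cube n) g (Rs k) (A.mulVec x))]
    apply Finset.sum_congr rfl
    intro R _
    simp only [hDdef]
    rw [Finset.sum_mul]
    apply Finset.sum_congr rfl
    intro k hk
    rw [(Finset.mem_filter.mp hk).2]
  have hper : ∀ k, corruptMin (cube n) g (Rs k) (A.mulVec x)
      ≤ g (A.mulVec (xt k)) + c * δ := by
    intro k
    set u : Fin n → ℝ :=
      fun i => if i ∈ Rs k then A.mulVec (xt k) i else A.mulVec x i with hudef
    have hu_cube : u ∈ cube n := by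
      intro i
      simp only [hudef]
      split
      · exact htt k i
      · exact ht i
    have humem : u ∈ {t' ∈ cube n | ∀ i ∉ Rs k, t' i = A.mulVec x i} :=
      ⟨hu_cube, fun i hi => by simp only [hudef]; rw [if_neg hi]⟩
    have hbdd : BddBelow (g '' {t' ∈ cube n | ∀ i ∉ Rs k, t' i = A.mulVec x i}) := by
      refine ⟨-1, ?_⟩
      rintro z ⟨t', ht', rfl⟩
      exact (hrange t' ht'.1).1
    have h1 : corruptMin (cube n) g (Rs k) (A.mulVec x) ≤ g u :=
      csInf_le hbdd ⟨u, humem, rfl⟩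
    have h2 : |g u - g (A.mulVec (xt k))| ≤ c * δ := by
      apply hlip u hu_cube _ (htt k) δ hδ.le
      intro i
      simp only [hudef]
      by_cases hi : i ∈ Rs k
      · rw [if_pos hi]
        simpa using hδ.le
      · rw [if_neg hi]
        simp only [hRsdef, Finset.mem_filter, Finset.mem_univ, true_and, not_lt] at hi
        rw [abs_sub_comm]
        exact hi
    linarith [h1, (abs_le.mp h2).2]
  have hfin : ∑ k : Fin s → Fin m, w k * corruptMin (cube n) g (Rs k) (A.mulVec x)
      ≤ (∑ k : Fin s → Fin m, w k * g (A.mulVec (xt k))) + c * δ := by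
    calc ∑ k : Fin s → Fin m, w k * corruptMin (cube n) g (Rs k) (A.mulVec x)
        ≤ ∑ k : Fin s → Fin m, w k * (g (A.mulVec (xt k)) + c * δ) :=
          Finset.sum_le_sum fun k _ => mul_le_mul_of_nonneg_left (hper k) (hw0 k)
      _ = (∑ k : Fin s → Fin m, w k * g (A.mulVec (xt k)))
            + (∑ k : Fin s → Fin m, w k) * (c * δ) := by
          rw [Finset.sum_mul, ← Finset.sum_add_distrib]
          apply Finset.sum_congr rfl
          intro k _
          ring
      _ = (∑ k : Fin s → Fin m, w k * g (A.mulVec (xt k))) + c * δ := by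
          rw [hw1, one_mul]
  have hαβ : α' * β ≤ α * β := mul_le_mul_of_nonneg_right (min_le_left _ _) hβ
  rw [hsum1] at hst
  show g (A.mulVec x) - α * β - c * δ ≤ ∑ k : Fin s → Fin m, w k * g (A.mulVec (xt k))
  linarith
end

section
/- Let g : [-1,1]^n → [-1,1] be β-stable, let h be a (δ,ρ)-relaxation of g, let A be an n × m matrix with entries in [-1,1], let α > 0, and let s ≥ 2 ln(2/α)/δ² be an integer. Fix x ∈ Δ_m and let x̃ be the empirical distribution of s i.i.d. samples from x. Then E[h(A x̃)] ≥ g(A x) − αβ − ρ. -/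
open Finset

/-- `h` is a `(δ,ρ)`-relaxation of `g` on `K`. -/
def Relaxation {n : ℕ} (K : Set (Fin n → ℝ)) (h g : (Fin n → ℝ) → ℝ) (δ ρ : ℝ) : Prop :=
  ∀ t₁ ∈ K, ∀ t₂ ∈ K, (∀ i, |t₁ i - t₂ i| ≤ δ) → g t₁ - ρ ≤ h t₂



section Aux
open Real

lemma u_pos {p : ℝ} (hp0 : 0 ≤ p) (hp1 : p ≤ 1) (h : ℝ) : 0 < 1 - p + p * Real.exp h := by
  rcases eq_or_lt_of_le hp0 with h0 | h0
  · simp [← h0]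
  · nlinarith [Real.exp_pos h]

/-- derivative of the log-mgf-like function -/
noncomputable def phi (p h : ℝ) : ℝ := h / 4 + p - p * Real.exp h / (1 - p + p * Real.exp h)

noncomputable def gfun (p h : ℝ) : ℝ := h ^ 2 / 8 + h * p - Real.log (1 - p + p * Real.exp h)

lemma hasDerivAt_gfun {p : ℝ} (hp0 : 0 ≤ p) (hp1 : p ≤ 1) (h : ℝ) :
    HasDerivAt (gfun p) (phi p h) h := by
  have hu := u_pos hp0 hp1 h
  have hu' : HasDerivAt (fun h => 1 - p + p * Real.exp h) (p * Real.exp h) h :=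
    ((Real.hasDerivAt_exp h).const_mul p).const_add (1 - p)
  have hlog : HasDerivAt (fun h => Real.log (1 - p + p * Real.exp h))
      (p * Real.exp h / (1 - p + p * Real.exp h)) h := hu'.log (ne_of_gt hu)
  have h1 : HasDerivAt (fun h : ℝ => h ^ 2 / 8 + h * p) (h / 4 + p) h := by
    have := ((hasDerivAt_pow 2 h).div_const 8).add ((hasDerivAt_id h).mul_const p)
    exact this.congr_deriv (by norm_num; ring)
  have := h1.sub hlog
  exact this

lemma hasDerivAt_phi {p : ℝ} (hp0 : 0 ≤ p) (hp1 : p ≤ 1) (h : ℝ) :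
    HasDerivAt (phi p)
      (1/4 - (p * Real.exp h * (1 - p + p * Real.exp h) - p * Real.exp h * (p * Real.exp h)) /
        (1 - p + p * Real.exp h) ^ 2) h := by
  have hu := u_pos hp0 hp1 h
  have hu' : HasDerivAt (fun h => 1 - p + p * Real.exp h) (p * Real.exp h) h :=
    ((Real.hasDerivAt_exp h).const_mul p).const_add (1 - p)
  have hE : HasDerivAt (fun h => p * Real.exp h) (p * Real.exp h) h :=
    (Real.hasDerivAt_exp h).const_mul p
  have hdiv := hE.div hu' (ne_of_gt hu)
  have h1 : HasDerivAt (fun h : ℝ => h / 4 + p) (1/4) h := by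
    have := ((hasDerivAt_id h).div_const 4).add_const p
    exact this
  exact h1.sub hdiv

lemma phi_deriv_nonneg {p : ℝ} (hp0 : 0 ≤ p) (hp1 : p ≤ 1) (h : ℝ) :
    0 ≤ 1/4 - (p * Real.exp h * (1 - p + p * Real.exp h) - p * Real.exp h * (p * Real.exp h)) /
        (1 - p + p * Real.exp h) ^ 2 := by
  have hu := u_pos hp0 hp1 h
  set E := p * Real.exp h
  set u := 1 - p + p * Real.exp h
  have hq : (E * u - E * E) / u ^ 2 = (E / u) * (1 - E / u) := by
    field_simp
  rw [hq]
  nlinarith [sq_nonneg (E / u - 1/2)]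

lemma phi_mono {p : ℝ} (hp0 : 0 ≤ p) (hp1 : p ≤ 1) : Monotone (phi p) := by
  apply monotone_of_deriv_nonneg
  · exact fun h => (hasDerivAt_phi hp0 hp1 h).differentiableAt
  · intro h
    rw [(hasDerivAt_phi hp0 hp1 h).deriv]
    exact phi_deriv_nonneg hp0 hp1 h

lemma phi_zero {p : ℝ} : phi p 0 = 0 := by
  simp [phi]

lemma gfun_nonneg {p : ℝ} (hp0 : 0 ≤ p) (hp1 : p ≤ 1) (h : ℝ) : 0 ≤ gfun p h := by
  have hg0 : gfun p 0 = 0 := by simp [gfun]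
  have hdiff : ∀ x, HasDerivAt (gfun p) (phi p x) x := hasDerivAt_gfun hp0 hp1
  have hd : Differentiable ℝ (gfun p) := fun x => (hdiff x).differentiableAt
  rcases le_total 0 h with hh | hh
  · have : MonotoneOn (gfun p) (Set.Ici 0) := by
      apply monotoneOn_of_deriv_nonneg (convex_Ici 0)
      · exact hd.continuous.continuousOn
      · intro x hx
        exact ((hdiff x).differentiableAt).differentiableWithinAt
      · intro x hx
        rw [(hdiff x).deriv]
        have := phi_mono hp0 hp1 (le_of_lt (by simpa using hx) : (0:ℝ) ≤ x)
        simpa [phi_zero] using this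
    have := this (Set.self_mem_Ici) (Set.mem_Ici.2 hh) hh
    rwa [hg0] at this
  · have : AntitoneOn (gfun p) (Set.Iic 0) := by
      apply antitoneOn_of_deriv_nonpos (convex_Iic 0)
      · exact hd.continuous.continuousOn
      · intro x hx
        exact ((hdiff x).differentiableAt).differentiableWithinAt
      · intro x hx
        rw [(hdiff x).deriv]
        have hx0 : x ≤ 0 := le_of_lt (by simpa using hx)
        have := phi_mono hp0 hp1 hx0
        simpa [phi_zero] using this
    have := this (Set.mem_Iic.2 hh) (Set.self_mem_Iic) hh
    rwa [hg0] at this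

/-- Hoeffding's lemma, core inequality. -/
lemma hoeff_core {p : ℝ} (hp0 : 0 ≤ p) (hp1 : p ≤ 1) (h : ℝ) :
    Real.exp (-(h * p)) * (1 - p + p * Real.exp h) ≤ Real.exp (h ^ 2 / 8) := by
  have hu := u_pos hp0 hp1 h
  have hg := gfun_nonneg hp0 hp1 h
  have hlog : Real.log (1 - p + p * Real.exp h) ≤ h ^ 2 / 8 + h * p := by
    unfold gfun at hg; linarith
  have := (Real.log_le_iff_le_exp hu).mp hlog
  calc Real.exp (-(h * p)) * (1 - p + p * Real.exp h)
      ≤ Real.exp (-(h * p)) * Real.exp (h ^ 2 / 8 + h * p) := by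
        exact mul_le_mul_of_nonneg_left this (Real.exp_nonneg _)
    _ = Real.exp (h ^ 2 / 8) := by rw [← Real.exp_add]; ring_nf

/-- MGF bound for a finitely supported distribution on `[-1,1]`. -/
lemma mgf_bound {m : ℕ} (x a : Fin m → ℝ) (hx0 : ∀ j, 0 ≤ x j) (hx1 : ∑ j, x j = 1)
    (ha : ∀ j, |a j| ≤ 1) (lam : ℝ) :
    ∑ j, x j * Real.exp (lam * (a j - ∑ j', x j' * a j')) ≤ Real.exp (lam ^ 2 / 2) := by
  set μ := ∑ j', x j' * a j' with hμ
  have hμ1 : |μ| ≤ 1 := by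
    rw [hμ]
    calc |∑ j', x j' * a j'| ≤ ∑ j', |x j' * a j'| := Finset.abs_sum_le_sum_abs _ _
      _ ≤ ∑ j', x j' := by
          apply Finset.sum_le_sum
          intro j _
          rw [abs_mul, abs_of_nonneg (hx0 j)]
          calc x j * |a j| ≤ x j * 1 := mul_le_mul_of_nonneg_left (ha j) (hx0 j)
            _ = x j := mul_one _
      _ = 1 := hx1
  -- chord bound termwise
  have chord : ∀ j, Real.exp (lam * (a j - μ)) ≤
      (1 - a j)/2 * Real.exp (-lam - lam * μ) + (1 + a j)/2 * Real.exp (lam - lam * μ) := by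
    intro j
    have haj := abs_le.mp (ha j)
    have hw1 : (0:ℝ) ≤ (1 - a j)/2 := by linarith [haj.2]
    have hw2 : (0:ℝ) ≤ (1 + a j)/2 := by linarith [haj.1]
    have hw3 : (1 - a j)/2 + (1 + a j)/2 = 1 := by ring
    have hcvx := convexOn_exp.2 (Set.mem_univ (-lam)) (Set.mem_univ lam) hw1 hw2 hw3
    simp only [smul_eq_mul] at hcvx
    have harg : (1 - a j)/2 * (-lam) + (1 + a j)/2 * lam = lam * a j := by ring
    rw [harg] at hcvx
    calc Real.exp (lam * (a j - μ)) = Real.exp (lam * a j) * Real.exp (-(lam * μ)) := by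
          rw [← Real.exp_add]; ring_nf
      _ ≤ ((1 - a j)/2 * Real.exp (-lam) + (1 + a j)/2 * Real.exp lam) * Real.exp (-(lam * μ)) := by
          apply mul_le_mul_of_nonneg_right hcvx (Real.exp_nonneg _)
      _ = (1 - a j)/2 * Real.exp (-lam - lam * μ) + (1 + a j)/2 * Real.exp (lam - lam * μ) := by
          rw [Real.exp_sub, Real.exp_sub, Real.exp_neg (lam * μ)]
          field_simp
  calc ∑ j, x j * Real.exp (lam * (a j - μ))
      ≤ ∑ j, x j * ((1 - a j)/2 * Real.exp (-lam - lam * μ) + (1 + a j)/2 * Real.exp (lam - lam * μ)) := by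
        apply Finset.sum_le_sum
        intro j _
        exact mul_le_mul_of_nonneg_left (chord j) (hx0 j)
    _ = (1 - μ)/2 * Real.exp (-lam - lam * μ) + (1 + μ)/2 * Real.exp (lam - lam * μ) := by
        have S1 : ∑ j, x j * ((1 - a j)/2 * Real.exp (-lam - lam * μ) + (1 + a j)/2 * Real.exp (lam - lam * μ))
            = (∑ j, x j) * ((Real.exp (-lam - lam * μ) + Real.exp (lam - lam * μ))/2)
              + (∑ j, x j * a j) * ((Real.exp (lam - lam * μ) - Real.exp (-lam - lam * μ))/2) := by
          rw [Finset.sum_mul, Finset.sum_mul, ← Finset.sum_add_distrib]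
          exact Finset.sum_congr rfl fun j _ => by ring
        rw [S1, hx1, ← hμ]
        ring
    _ ≤ Real.exp (lam ^ 2 / 2) := by
        have habs := abs_le.mp hμ1
        set p := (1 + μ)/2 with hp
        have hp0 : 0 ≤ p := by rw [hp]; linarith
        have hp1 : p ≤ 1 := by rw [hp]; linarith
        have key := hoeff_core hp0 hp1 (2 * lam)
        have h1 : (1 - μ)/2 * Real.exp (-lam - lam * μ) + (1 + μ)/2 * Real.exp (lam - lam * μ)
            = Real.exp (-(2 * lam * p)) * (1 - p + p * Real.exp (2 * lam)) := by
          rw [show -lam - lam * μ = -(2 * lam * p) by rw [hp]; ring,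
              show lam - lam * μ = -(2 * lam * p) + 2 * lam by rw [hp]; ring,
              Real.exp_add]
          rw [hp]; ring
        have h2 : (2 * lam) ^ 2 / 8 = lam ^ 2 / 2 := by ring
        rw [h1]
        rw [h2] at key
        exact key

/-- Tensorization. -/
lemma prod_sum_pow {s m : ℕ} (f : Fin m → ℝ) :
    ∑ k : Fin s → Fin m, ∏ l, f (k l) = (∑ j, f j) ^ s := by
  rw [← Fintype.prod_sum (fun _ : Fin s => fun j : Fin m => f j)]
  simp [Finset.prod_const]

/-- One-sided Chernoff bound. -/
lemma chernoff_one {s m : ℕ} (x a : Fin m → ℝ) (hx0 : ∀ j, 0 ≤ x j) (hx1 : ∑ j, x j = 1)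
    (ha : ∀ j, |a j| ≤ 1) (δ : ℝ) (hδ : 0 < δ) :
    ∑ k ∈ Finset.univ.filter
        (fun k : Fin s → Fin m => (s : ℝ) * δ ≤ ∑ l, (a (k l) - ∑ j', x j' * a j')),
      ∏ l, x (k l) ≤ Real.exp (-(s : ℝ) * δ ^ 2 / 2) := by
  set μ := ∑ j', x j' * a j' with hμ
  have hpnn : ∀ k : Fin s → Fin m, 0 ≤ ∏ l, x (k l) :=
    fun k => Finset.prod_nonneg fun l _ => hx0 (k l)
  calc ∑ k ∈ Finset.univ.filter (fun k : Fin s → Fin m => (s:ℝ) * δ ≤ ∑ l, (a (k l) - μ)),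
        ∏ l, x (k l)
      ≤ ∑ k ∈ Finset.univ.filter (fun k : Fin s → Fin m => (s:ℝ) * δ ≤ ∑ l, (a (k l) - μ)),
        (∏ l, x (k l)) * Real.exp (δ * (∑ l, (a (k l) - μ) - (s:ℝ) * δ)) := by
        apply Finset.sum_le_sum
        intro k hk
        rw [Finset.mem_filter] at hk
        have hnn : 0 ≤ δ * (∑ l, (a (k l) - μ) - (s:ℝ) * δ) :=
          mul_nonneg hδ.le (by linarith [hk.2])
        exact le_mul_of_one_le_right (hpnn k) (Real.one_le_exp hnn)
    _ ≤ ∑ k : Fin s → Fin m, (∏ l, x (k l)) * Real.exp (δ * (∑ l, (a (k l) - μ) - (s:ℝ) * δ)) := by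
        apply Finset.sum_le_sum_of_subset_of_nonneg (Finset.filter_subset _ _)
        intro k _ _
        exact mul_nonneg (hpnn k) (Real.exp_nonneg _)
    _ = Real.exp (-(s:ℝ) * δ^2) * ∑ k : Fin s → Fin m, ∏ l, (x (k l) * Real.exp (δ * (a (k l) - μ))) := by
        rw [Finset.mul_sum]
        apply Finset.sum_congr rfl
        intro k _
        have e : δ * (∑ l, (a (k l) - μ) - (s:ℝ) * δ)
            = (∑ l, δ * (a (k l) - μ)) + (-(s:ℝ) * δ^2) := by
          rw [← Finset.mul_sum]; ring
        rw [e, Real.exp_add, Real.exp_sum, Finset.prod_mul_distrib]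
        ring
    _ = Real.exp (-(s:ℝ) * δ^2) * (∑ j, x j * Real.exp (δ * (a j - μ))) ^ s := by
        congr 1
        exact prod_sum_pow (fun j => x j * Real.exp (δ * (a j - μ)))
    _ ≤ Real.exp (-(s:ℝ) * δ^2) * Real.exp (δ^2/2) ^ s := by
        apply mul_le_mul_of_nonneg_left _ (Real.exp_nonneg _)
        apply pow_le_pow_left₀ (Finset.sum_nonneg fun j _ => mul_nonneg (hx0 j) (Real.exp_nonneg _))
        exact mgf_bound x a hx0 hx1 ha δ
    _ = Real.exp (-(s:ℝ) * δ^2/2) := by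
        rw [← Real.exp_nat_mul, ← Real.exp_add]
        congr 1
        ring

/-- membership of `A.mulVec y` in the cube for subprobability vectors `y`. -/
lemma mulVec_mem_cube {n m : ℕ} (A : Matrix (Fin n) (Fin m) ℝ)
    (hA : ∀ i j, A i j ∈ Set.Icc (-1 : ℝ) 1) (y : Fin m → ℝ)
    (hy0 : ∀ j, 0 ≤ y j) (hy1 : ∑ j, y j ≤ 1) : A.mulVec y ∈ cube n := by
  intro i
  have habs : |A.mulVec y i| ≤ 1 := by
    have h1 : A.mulVec y i = ∑ j, A i j * y j := by
      simp [Matrix.mulVec, dotProduct]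
    rw [h1]
    calc |∑ j, A i j * y j| ≤ ∑ j, |A i j * y j| := Finset.abs_sum_le_sum_abs _ _
      _ ≤ ∑ j, y j := by
          apply Finset.sum_le_sum
          intro j _
          rw [abs_mul, abs_of_nonneg (hy0 j)]
          have : |A i j| ≤ 1 := abs_le.mpr ⟨(hA i j).1, (hA i j).2⟩
          calc |A i j| * y j ≤ 1 * y j := mul_le_mul_of_nonneg_right this (hy0 j)
            _ = y j := one_mul _
      _ ≤ 1 := hy1
  exact ⟨(abs_le.mp habs).1, (abs_le.mp habs).2⟩

end Aux

/-- bi-criteria sampling theorem. If `g` is `β`-stable and `h` is a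
`(δ,ρ)`-relaxation of `g`, then `E[h(A x̃)] ≥ g(Ax) − αβ − ρ`. -/
theorem mixture_sampling_bicriteria {n m : ℕ} (β α δ ρ : ℝ)
    (hα : 0 < α) (hδ : 0 < δ) (hρ : 0 ≤ ρ)
    (g h : (Fin n → ℝ) → ℝ)
    (hgrange : ∀ t ∈ cube n, g t ∈ Set.Icc (-1 : ℝ) 1)
    (hhrange : ∀ t ∈ cube n, h t ∈ Set.Icc (-1 : ℝ) 1)
    (hstable : Stable (cube n) g β)
    (hrelax : Relaxation (cube n) h g δ ρ)
    (A : Matrix (Fin n) (Fin m) ℝ) (hA : ∀ i j, A i j ∈ Set.Icc (-1 : ℝ) 1)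
    (s : ℕ) (hs : 2 * Real.log (2 / α) / δ ^ 2 ≤ s)
    (x : Fin m → ℝ) (hx : x ∈ stdSimplex ℝ (Fin m)) :
    g (A.mulVec x) - α * β - ρ ≤
      ∑ k : Fin s → Fin m, (∏ i, x (k i)) *
        h (A.mulVec fun j => ((Finset.univ.filter fun i => k i = j).card : ℝ) / s) := by
  classical
  obtain ⟨hx0, hx1⟩ := hx
  set t : Fin n → ℝ := A.mulVec x with ht
  set p : (Fin s → Fin m) → ℝ := fun k => ∏ i, x (k i) with hp
  set tt : (Fin s → Fin m) → (Fin n → ℝ) :=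
    fun k => A.mulVec fun j => ((Finset.univ.filter fun i => k i = j).card : ℝ) / s with htt
  have hpnn : ∀ k, 0 ≤ p k := fun k => Finset.prod_nonneg fun l _ => hx0 (k l)
  have hpsum : ∑ k, p k = 1 := by
    rw [hp]
    show ∑ k : Fin s → Fin m, ∏ l, x (k l) = 1
    rw [prod_sum_pow x, hx1, one_pow]
  have htcube : t ∈ cube n := mulVec_mem_cube A hA x hx0 (le_of_eq hx1)
  have hcount : ∀ k : Fin s → Fin m,
      ∑ j, ((Finset.univ.filter fun i => k i = j).card : ℝ) = (s : ℝ) := by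
    intro k
    rw [← Nat.cast_sum]
    norm_cast
    have := Finset.sum_card_fiberwise_eq_card_filter (Finset.univ : Finset (Fin s))
      (Finset.univ : Finset (Fin m)) k
    simpa using this
  have httcube : ∀ k, tt k ∈ cube n := by
    intro k
    apply mulVec_mem_cube A hA _ (fun j => by positivity)
    rw [← Finset.sum_div, hcount k]
    rcases Nat.eq_zero_or_pos s with hs0 | hs0
    · simp [hs0]
    · rw [div_self (by positivity)]
  set Rset : (Fin s → Fin m) → Finset (Fin n) :=
    fun k => Finset.univ.filter (fun i => δ < |tt k i - t i|) with hRset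
  set D : Finset (Fin n) → ℝ :=
    fun R => ∑ k ∈ Finset.univ.filter (fun k => Rset k = R), p k with hD
  have hDnn : ∀ R, 0 ≤ D R := fun R => Finset.sum_nonneg fun k _ => hpnn k
  have hDsum : ∑ R : Finset (Fin n), D R = 1 := by
    rw [hD]
    show ∑ R : Finset (Fin n), ∑ k ∈ Finset.univ.filter (fun k => Rset k = R), p k = 1
    rw [Finset.sum_fiberwise Finset.univ Rset p]
    exact hpsum
  -- marginal identity
  have hmarg : ∀ i : Fin n, ∑ R ∈ Finset.univ.filter (fun R => i ∈ R), D R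
      = ∑ k ∈ Finset.univ.filter (fun k => i ∈ Rset k), p k := by
    intro i
    have e1 := Finset.sum_fiberwise Finset.univ Rset
      (fun k => if i ∈ Rset k then p k else 0)
    have e2 : ∀ R : Finset (Fin n),
        (∑ k ∈ Finset.univ.filter (fun k => Rset k = R), if i ∈ Rset k then p k else 0)
        = if i ∈ R then D R else 0 := by
      intro R
      by_cases hiR : i ∈ R
      · rw [if_pos hiR, hD]
        apply Finset.sum_congr rfl
        intro k hk
        rw [if_pos]
        rw [(Finset.mem_filter.mp hk).2]
        exact hiR
      · rw [if_neg hiR]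
        apply Finset.sum_eq_zero
        intro k hk
        rw [if_neg]
        rw [(Finset.mem_filter.mp hk).2]
        exact hiR
    calc ∑ R ∈ Finset.univ.filter (fun R => i ∈ R), D R
        = ∑ R : Finset (Fin n), if i ∈ R then D R else 0 := Finset.sum_filter _ _
      _ = ∑ R : Finset (Fin n),
            ∑ k ∈ Finset.univ.filter (fun k => Rset k = R), if i ∈ Rset k then p k else 0 := by
          exact (Finset.sum_congr rfl fun R _ => (e2 R).symm)
      _ = ∑ k : Fin s → Fin m, if i ∈ Rset k then p k else 0 := e1
      _ = ∑ k ∈ Finset.univ.filter (fun k => i ∈ Rset k), p k := (Finset.sum_filter _ _).symm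
  -- Chernoff bound on marginals
  have hchern : ∀ i : Fin n,
      ∑ k ∈ Finset.univ.filter (fun k => i ∈ Rset k), p k ≤ min α 1 := by
    intro i
    have hle1 : ∑ k ∈ Finset.univ.filter (fun k => i ∈ Rset k), p k ≤ 1 := by
      rw [← hpsum]
      exact Finset.sum_le_sum_of_subset_of_nonneg (Finset.filter_subset _ _)
        (fun k _ _ => hpnn k)
    refine le_min ?_ hle1
    by_cases hα1 : 1 ≤ α
    · exact hle1.trans hα1
    push_neg at hα1
    -- now α < 1, so s ≥ 1
    have hlog : 0 < Real.log (2 / α) := Real.log_pos (by rw [lt_div_iff₀ hα]; linarith)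
    have hspos : (0 : ℝ) < s := lt_of_lt_of_le (by positivity) hs
    set a : Fin m → ℝ := fun j => A i j with ha
    have hab : ∀ j, |a j| ≤ 1 := fun j => abs_le.mpr ⟨(hA i j).1, (hA i j).2⟩
    have hab' : ∀ j, |(-a) j| ≤ 1 := fun j => by rw [Pi.neg_apply, abs_neg]; exact hab j
    set μ : ℝ := ∑ j', x j' * a j' with hμ
    have hti : t i = μ := by
      rw [ht, hμ]
      show (A.mulVec x) i = _
      simp [Matrix.mulVec, dotProduct]
      exact Finset.sum_congr rfl fun j _ => mul_comm _ _
    have htti : ∀ k, tt k i = (∑ l, a (k l)) / s := by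
      intro k
      rw [htt]
      show (A.mulVec _) i = _
      simp only [Matrix.mulVec, dotProduct]
      have e1 : ∀ j, A i j * ((((Finset.univ.filter fun i' => k i' = j).card : ℕ) : ℝ) / s)
          = (a j * ((Finset.univ.filter fun i' => k i' = j).card : ℝ)) / s := fun j => by
        rw [ha]; ring
      rw [Finset.sum_congr rfl (fun j _ => e1 j), ← Finset.sum_div]
      congr 1
      have := Finset.sum_fiberwise' (Finset.univ : Finset (Fin s)) k a
      rw [← this]
      apply Finset.sum_congr rfl
      intro j _
      rw [Finset.sum_const, nsmul_eq_mul]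
      ring
    have hsub : Finset.univ.filter (fun k : Fin s → Fin m => i ∈ Rset k) ⊆
        (Finset.univ.filter (fun k : Fin s → Fin m =>
            (s : ℝ) * δ ≤ ∑ l, (a (k l) - ∑ j', x j' * a j'))) ∪
        (Finset.univ.filter (fun k : Fin s → Fin m =>
            (s : ℝ) * δ ≤ ∑ l, ((-a) (k l) - ∑ j', x j' * (-a) j'))) := by
      intro k hk
      rw [Finset.mem_filter, hRset] at hk
      have hk2 := hk.2
      simp only [Finset.mem_filter, Finset.mem_univ, true_and] at hk2
      have hdev : δ < |(∑ l, a (k l)) / s - μ| := by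
        rw [← htti k, ← hti]; exact hk2
      have hdev2 : (s : ℝ) * δ < |∑ l, a (k l) - (s : ℝ) * μ| := by
        have e : (∑ l, a (k l)) / s - μ = (∑ l, a (k l) - (s : ℝ) * μ) / s := by
          field_simp
        rw [e, abs_div, abs_of_pos hspos, lt_div_iff₀ hspos] at hdev
        calc (s : ℝ) * δ = δ * s := mul_comm _ _
          _ < |∑ l, a (k l) - (s : ℝ) * μ| := hdev
      rw [Finset.mem_union, Finset.mem_filter, Finset.mem_filter]
      have hsum1 : ∑ l, (a (k l) - ∑ j', x j' * a j') = ∑ l, a (k l) - (s : ℝ) * μ := by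
        rw [Finset.sum_sub_distrib, ← hμ, Finset.sum_const, Finset.card_univ, Fintype.card_fin,
          nsmul_eq_mul]
      have hsum2 : ∑ l, ((-a) (k l) - ∑ j', x j' * (-a) j')
          = -(∑ l, a (k l) - (s : ℝ) * μ) := by
        simp only [Pi.neg_apply, mul_neg]
        rw [Finset.sum_sub_distrib, Finset.sum_neg_distrib, Finset.sum_neg_distrib, ← hμ,
          Finset.sum_const, Finset.card_univ, Fintype.card_fin, nsmul_eq_mul]
        ring
      rcases lt_abs.mp hdev2 with hc | hc
      · left; exact ⟨Finset.mem_univ k, by rw [hsum1]; linarith⟩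
      · right; exact ⟨Finset.mem_univ k, by rw [hsum2]; linarith⟩
    have hch1 := chernoff_one (s := s) x a hx0 hx1 hab δ hδ
    have hch2 := chernoff_one (s := s) x (-a) hx0 hx1 hab' δ hδ
    have hunion : ∑ k ∈ Finset.univ.filter (fun k : Fin s → Fin m => i ∈ Rset k), p k ≤
        2 * Real.exp (-(s : ℝ) * δ ^ 2 / 2) := by
      set F1 := Finset.univ.filter (fun k : Fin s → Fin m =>
        (s : ℝ) * δ ≤ ∑ l, (a (k l) - ∑ j', x j' * a j'))
      set F2 := Finset.univ.filter (fun k : Fin s → Fin m =>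
        (s : ℝ) * δ ≤ ∑ l, ((-a) (k l) - ∑ j', x j' * (-a) j'))
      have h1 : ∑ k ∈ Finset.univ.filter (fun k : Fin s → Fin m => i ∈ Rset k), p k ≤
          ∑ k ∈ F1 ∪ F2, p k :=
        Finset.sum_le_sum_of_subset_of_nonneg hsub (fun k _ _ => hpnn k)
      have h2 : ∑ k ∈ F1 ∪ F2, p k ≤ ∑ k ∈ F1, p k + ∑ k ∈ F2, p k := by
        have := Finset.sum_union_inter (s₁ := F1) (s₂ := F2) (f := p)
        have hnn : 0 ≤ ∑ k ∈ F1 ∩ F2, p k := Finset.sum_nonneg fun k _ => hpnn k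
        linarith
      have h3 : ∑ k ∈ F1, p k ≤ Real.exp (-(s : ℝ) * δ ^ 2 / 2) := hch1
      have h4 : ∑ k ∈ F2, p k ≤ Real.exp (-(s : ℝ) * δ ^ 2 / 2) := hch2
      linarith
    -- 2 exp(-sδ²/2) ≤ α
    have hexp : 2 * Real.exp (-(s : ℝ) * δ ^ 2 / 2) ≤ α := by
      have h1 : Real.log (2 / α) ≤ (s : ℝ) * δ ^ 2 / 2 := by
        rw [div_le_iff₀ (by positivity : (0 : ℝ) < δ ^ 2)] at hs
        nlinarith
      have h2 : 2 / α ≤ Real.exp ((s : ℝ) * δ ^ 2 / 2) := by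
        rw [← Real.exp_log (show (0 : ℝ) < 2 / α by positivity)]
        exact Real.exp_le_exp.mpr h1
      have hE : (0 : ℝ) < Real.exp ((s : ℝ) * δ ^ 2 / 2) := Real.exp_pos _
      rw [div_le_iff₀ hα] at h2
      have hneg : Real.exp (-(s : ℝ) * δ ^ 2 / 2)
          = (Real.exp ((s : ℝ) * δ ^ 2 / 2))⁻¹ := by
        rw [← Real.exp_neg]
        congr 1
        ring
      rw [hneg]
      have hEinv := mul_inv_cancel₀ (ne_of_gt hE)
      nlinarith [inv_pos.mpr hE]
    exact hunion.trans hexp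
  have hlight : IsLight D (min α 1) := by
    intro i
    rw [hmarg i]
    exact hchern i
  -- β ≥ 0
  have hcorr_empty : corruptMin (cube n) g ∅ t = g t := by
    have hset : {t' ∈ cube n | ∀ i ∉ (∅ : Finset (Fin n)), t' i = t i} = {t} := by
      ext t'
      constructor
      · rintro ⟨_, h2⟩
        funext i
        exact h2 i (Finset.notMem_empty i)
      · rintro rfl
        exact ⟨htcube, fun i _ => rfl⟩
    rw [corruptMin, hset, Set.image_singleton, csInf_singleton]
  have hβ : 0 ≤ β := by
    set D0 : Finset (Fin n) → ℝ := fun R => if R = ∅ then 1 else 0 with hD0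
    have hD0dist : IsDist D0 := by
      constructor
      · intro R; rw [hD0]; dsimp only; split <;> norm_num
      · rw [hD0]; simp
    have hD0light : IsLight D0 1 := by
      intro i
      have : ∑ R ∈ Finset.univ.filter (fun R : Finset (Fin n) => i ∈ R), D0 R = 0 := by
        apply Finset.sum_eq_zero
        intro R hR
        rw [hD0]
        dsimp only
        rw [if_neg]
        intro hRe
        rw [hRe] at hR
        exact Finset.notMem_empty i (Finset.mem_filter.mp hR).2
      rw [this]; norm_num
    have hst0 := hstable t htcube 1 ⟨one_pos, le_refl 1⟩ D0 hD0dist hD0light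
    have hsum0 : ∑ R : Finset (Fin n), D0 R * corruptMin (cube n) g R t
        = corruptMin (cube n) g ∅ t := by
      rw [hD0]
      rw [Finset.sum_eq_single ∅]
      · simp
      · intro R _ hR; simp [hR]
      · intro hR; exact absurd (Finset.mem_univ ∅) hR
    rw [hsum0, hcorr_empty] at hst0
    linarith
  -- stability applied
  have hα' : min α 1 ∈ Set.Ioc (0 : ℝ) 1 := ⟨lt_min hα one_pos, min_le_right _ _⟩
  have hst := hstable t htcube (min α 1) hα' D ⟨hDnn, hDsum⟩ hlight
  -- regrouping
  have hregroup : ∑ R : Finset (Fin n), D R * corruptMin (cube n) g R t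
      = ∑ k : Fin s → Fin m, p k * corruptMin (cube n) g (Rset k) t := by
    rw [← Finset.sum_fiberwise Finset.univ Rset
      (fun k => p k * corruptMin (cube n) g (Rset k) t)]
    apply Finset.sum_congr rfl
    intro R _
    rw [hD]
    dsimp only
    rw [Finset.sum_mul]
    apply Finset.sum_congr rfl
    intro k hk
    rw [(Finset.mem_filter.mp hk).2]
  -- per-sample bound via relaxation
  have hcorr : ∀ k, corruptMin (cube n) g (Rset k) t ≤ h (tt k) + ρ := by
    intro k
    set t1 : Fin n → ℝ := fun i => if i ∈ Rset k then tt k i else t i with ht1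
    have ht1cube : t1 ∈ cube n := by
      intro i
      rw [ht1]
      dsimp only
      split
      · exact httcube k i
      · exact htcube i
    have ht1mem : t1 ∈ {t' ∈ cube n | ∀ i ∉ Rset k, t' i = t i} := by
      refine ⟨ht1cube, fun i hi => ?_⟩
      rw [ht1]
      dsimp only
      rw [if_neg hi]
    have hbdd : BddBelow (g '' {t' ∈ cube n | ∀ i ∉ Rset k, t' i = t i}) := by
      refine ⟨-1, fun y hy => ?_⟩
      obtain ⟨t', ht', rfl⟩ := hy
      exact (hgrange t' ht'.1).1
    have h1 : corruptMin (cube n) g (Rset k) t ≤ g t1 :=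
      csInf_le hbdd ⟨t1, ht1mem, rfl⟩
    have hclose : ∀ i, |t1 i - tt k i| ≤ δ := by
      intro i
      rw [ht1]
      dsimp only
      by_cases hi : i ∈ Rset k
      · rw [if_pos hi]; simpa using hδ.le
      · rw [if_neg hi]
        rw [hRset] at hi
        simp only [Finset.mem_filter, Finset.mem_univ, true_and, not_lt] at hi
        rw [abs_sub_comm]
        exact hi
    have h2 : g t1 - ρ ≤ h (tt k) := hrelax t1 ht1cube (tt k) (httcube k) hclose
    linarith
  -- final chain
  have hchain : g t - α * β - ρ ≤ ∑ k : Fin s → Fin m, p k * h (tt k) := by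
    have step1 : g t - α * β - ρ ≤ g t - min α 1 * β - ρ := by
      have hm : min α 1 ≤ α := min_le_left _ _
      have := mul_le_mul_of_nonneg_right hm hβ
      linarith
    have step4 : ∑ k : Fin s → Fin m, p k * corruptMin (cube n) g (Rset k) t ≤
        ∑ k : Fin s → Fin m, p k * (h (tt k) + ρ) :=
      Finset.sum_le_sum fun k _ => mul_le_mul_of_nonneg_left (hcorr k) (hpnn k)
    have step5 : ∑ k : Fin s → Fin m, p k * (h (tt k) + ρ)
        = ∑ k : Fin s → Fin m, p k * h (tt k) + ρ := by
      have e : ∑ k : Fin s → Fin m, p k * (h (tt k) + ρ)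
          = ∑ k : Fin s → Fin m, p k * h (tt k) + (∑ k : Fin s → Fin m, p k) * ρ := by
        rw [Finset.sum_mul, ← Finset.sum_add_distrib]
        exact Finset.sum_congr rfl fun k _ => by ring
      rw [e, hpsum, one_mul]
    rw [hregroup] at hst
    linarith
  exact hchain
end

section
/- Fix a weight vector w ∈ Δ_n. The lottery revenue function g^(lot)_w(t) := max_{p ≥ 0} { p · Σ_{i=1}^n w_i · 1[t_i ≥ p] } on [0,1]^n is 1-stable: for every t ∈ [0,1]^n, every α ∈ (0,1], and every α-light distribution D over subsets of [n], E_{R∼D}[min{g^(lot)_w(t') : t' ⊳_R t}] ≥ g^(lot)_w(t) − α. -/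
open Finset

/-- The lottery revenue function `g^(lot)_w(t) = max_{p ≥ 0} p · Σᵢ wᵢ · 1[tᵢ ≥ p]`. -/
noncomputable def gLot {n : ℕ} (w : Fin n → ℝ) (t : Fin n → ℝ) : ℝ :=
  sSup {y : ℝ | ∃ p : ℝ, 0 ≤ p ∧ y = p * ∑ i, w i * (if p ≤ t i then 1 else 0)}

lemma gLot_bdd {n : ℕ} (w t : Fin n → ℝ) (hw : w ∈ stdSimplex ℝ (Fin n)) (ht : t ∈ cube01 n) :
    BddAbove {y : ℝ | ∃ p : ℝ, 0 ≤ p ∧ y = p * ∑ i, w i * (if p ≤ t i then 1 else 0)} := by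
  refine ⟨1, ?_⟩
  rintro y ⟨p, hp, rfl⟩
  by_cases hp1 : p ≤ 1
  · have hs1 : ∑ i, w i * (if p ≤ t i then 1 else 0) ≤ 1 := by
      have h' : ∑ i, w i * (if p ≤ t i then 1 else 0) ≤ ∑ i, w i := by
        apply Finset.sum_le_sum
        intro i _
        by_cases h : p ≤ t i <;> simp [h, hw.1 i]
      rw [hw.2] at h'
      exact h'
    have hs0 : (0:ℝ) ≤ ∑ i, w i * (if p ≤ t i then 1 else 0) := by
      apply Finset.sum_nonneg
      intro i _
      by_cases h : p ≤ t i <;> simp [h, hw.1 i]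
    nlinarith
  · have : ∀ i, ¬ p ≤ t i := fun i => by
      have := (ht i).2; push_neg at hp1; linarith
    simp [this]

lemma gLot_nonneg {n : ℕ} (w t : Fin n → ℝ) (hw : w ∈ stdSimplex ℝ (Fin n)) (ht : t ∈ cube01 n) :
    0 ≤ gLot w t := by
  apply le_csSup (gLot_bdd w t hw ht)
  exact ⟨0, le_rfl, by simp⟩

lemma gLot_corrupt {n : ℕ} (w : Fin n → ℝ) (hw : w ∈ stdSimplex ℝ (Fin n))
    (t t' : Fin n → ℝ) (ht : t ∈ cube01 n) (ht' : t' ∈ cube01 n)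
    (R : Finset (Fin n)) (hR : ∀ i ∉ R, t' i = t i) :
    gLot w t - ∑ i ∈ R, w i ≤ gLot w t' := by
  have hwR : (0:ℝ) ≤ ∑ i ∈ R, w i := Finset.sum_nonneg fun i _ => hw.1 i
  rw [sub_le_iff_le_add]
  apply Real.sSup_le
  · rintro y ⟨p, hp, rfl⟩
    have h1 : p * ∑ i, w i * (if p ≤ t i then 1 else 0)
        ≤ p * (∑ i, w i * (if p ≤ t' i then 1 else 0)) + ∑ i ∈ R, w i := by
      have hRsum : ∑ i ∈ R, w i = ∑ i : Fin n, (if i ∈ R then w i else 0) := by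
        rw [Finset.sum_ite_mem, Finset.univ_inter]
      rw [hRsum, Finset.mul_sum, Finset.mul_sum, ← Finset.sum_add_distrib]
      apply Finset.sum_le_sum
      intro i _
      by_cases hiR : i ∈ R
      · simp only [hiR, if_true]
        have hti : t i ≤ 1 := (ht i).2
        by_cases h : p ≤ t i
        · simp only [h, if_true, mul_one]
          by_cases h' : p ≤ t' i
          · simp only [h', if_true, mul_one]
            have := hw.1 i; nlinarith
          · simp only [h', if_false, mul_zero]
            have := hw.1 i; nlinarith
        · simp only [h, if_false, mul_zero]
          by_cases h' : p ≤ t' i <;> simp [h'] <;> have := hw.1 i <;> nlinarith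
      · rw [hR i hiR]; simp [hiR]
    have h2 : p * ∑ i, w i * (if p ≤ t' i then 1 else 0) ≤ gLot w t' :=
      le_csSup (gLot_bdd w t' hw ht') ⟨p, hp, rfl⟩
    linarith
  · have := gLot_nonneg w t' hw ht'
    linarith

/-- the lottery revenue function is 1-stable on `[0,1]^n`. -/
theorem gLot_stable {n : ℕ} (w : Fin n → ℝ) (hw : w ∈ stdSimplex ℝ (Fin n)) :
    Stable (cube01 n) (gLot w) 1 := by
  intro t ht α hα D hD hL
  have key : ∀ R : Finset (Fin n),
      gLot w t - ∑ i ∈ R, w i ≤ corruptMin (cube01 n) (gLot w) R t := by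
    intro R
    apply le_csInf
    · exact ⟨gLot w t, t, ⟨ht, fun i _ => rfl⟩, rfl⟩
    · rintro b ⟨t', ⟨ht', hR⟩, rfl⟩
      exact gLot_corrupt w hw t t' ht ht' R hR
  have hstep : ∑ R : Finset (Fin n), D R * (gLot w t - ∑ i ∈ R, w i)
      ≤ ∑ R : Finset (Fin n), D R * corruptMin (cube01 n) (gLot w) R t := by
    apply Finset.sum_le_sum
    intro R _
    exact mul_le_mul_of_nonneg_left (key R) (hD.1 R)
  have hX : ∑ R : Finset (Fin n), D R * ∑ i ∈ R, w i ≤ α := by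
    have h1 : ∑ R : Finset (Fin n), D R * ∑ i ∈ R, w i
        = ∑ i : Fin n, ∑ R : Finset (Fin n), (if i ∈ R then D R * w i else 0) := by
      rw [Finset.sum_comm]
      apply Finset.sum_congr rfl
      intro R _
      rw [Finset.mul_sum]
      exact ((Finset.sum_ite_mem Finset.univ R fun i => D R * w i).trans
        (by rw [Finset.univ_inter])).symm
    rw [h1]
    calc ∑ i : Fin n, ∑ R : Finset (Fin n), (if i ∈ R then D R * w i else 0)
        = ∑ i : Fin n, (∑ R ∈ Finset.univ.filter (fun R => i ∈ R), D R) * w i := by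
          apply Finset.sum_congr rfl
          intro i _
          rw [Finset.sum_filter, Finset.sum_mul]
          apply Finset.sum_congr rfl
          intro R _
          by_cases h : i ∈ R <;> simp [h]
      _ ≤ ∑ i : Fin n, α * w i := by
          apply Finset.sum_le_sum
          intro i _
          exact mul_le_mul_of_nonneg_right (hL i) (hw.1 i)
      _ = α := by rw [← Finset.mul_sum, hw.2, mul_one]
  have hsum : ∑ R : Finset (Fin n), D R * (gLot w t - ∑ i ∈ R, w i)
      = gLot w t - ∑ R : Finset (Fin n), D R * ∑ i ∈ R, w i := by
    simp only [mul_sub]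
    rw [Finset.sum_sub_distrib, ← Finset.sum_mul, hD.2, one_mul]
  have : gLot w t - α ≤ ∑ R : Finset (Fin n), D R * corruptMin (cube01 n) (gLot w) R t := by
    rw [hsum] at hstep
    linarith
  linarith [this]
end

section
/- The function max2 : [0,1]^n → [0,1] returning the second-largest entry of its input (n ≥ 2) is 2-stable: for every t ∈ [0,1]^n, every α ∈ (0,1], and every α-light distribution D over subsets of [n], E_{R∼D}[min{max2(t') : t' ⊳_R t}] ≥ max2(t) − 2α. -/
open Finset

/-- `max2 t` is the second-largest entry of `t`. -/
noncomputable def max2 {n : ℕ} (t : Fin n → ℝ) : ℝ := kthLargest t 2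

lemma ofFn_coe {n : ℕ} (t : Fin n → ℝ) :
    (↑(List.ofFn t) : Multiset ℝ) = Multiset.map t Finset.univ.val := by
  rw [List.ofFn_eq_map]; rfl

lemma pair_le_univ {n : ℕ} {i j : Fin n} (hij : i ≠ j) :
    ({i, j} : Multiset (Fin n)) ≤ Finset.univ.val := by
  have hi : i ∈ Finset.univ.val := Finset.mem_univ_val i
  rw [← Multiset.cons_erase hi]
  refine Multiset.cons_le_cons i ?_
  rw [Multiset.singleton_le, Multiset.mem_erase_of_ne hij.symm]
  exact Finset.mem_univ_val j

lemma pair_le_map_univ {n : ℕ} {t : Fin n → ℝ} {i j : Fin n} (hij : i ≠ j) :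
    ({t i, t j} : Multiset ℝ) ≤ Multiset.map t Finset.univ.val := by
  have := Multiset.map_le_map (f := t) (pair_le_univ hij)
  simpa using this

lemma sort_length {n : ℕ} (t : Fin n → ℝ) :
    ((List.ofFn t).insertionSort (· ≥ ·)).length = n := by
  rw [List.length_insertionSort, List.length_ofFn]

lemma sort_coe {n : ℕ} (t : Fin n → ℝ) :
    (↑((List.ofFn t).insertionSort (· ≥ ·)) : Multiset ℝ) = Multiset.map t Finset.univ.val := by
  rw [← ofFn_coe]
  exact Quot.sound (List.perm_insertionSort _ _)

lemma min_le_kthLargest2 {n : ℕ} (u : Fin n → ℝ) {i j : Fin n} (hij : i ≠ j) :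
    min (u i) (u j) ≤ kthLargest u 2 := by
  set s := (List.ofFn u).insertionSort (· ≥ ·) with hs
  set m := min (u i) (u j) with hm
  by_contra hcon
  push_neg at hcon
  have hn2 : 2 ≤ n := by
    have h := Fintype.one_lt_card_iff.mpr ⟨i, j, hij⟩
    simp at h; omega
  have hlen : s.length = n := sort_length u
  have h1 : 1 < s.length := by omega
  have hget : kthLargest u 2 = s[1] := by
    show s.getD 1 0 = s[1]
    exact List.getD_eq_getElem s 0 h1
  rw [hget] at hcon
  have hsorted : List.Pairwise (· ≥ ·) s := List.pairwise_insertionSort _ _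
  have hb : s.countP (fun x => decide (m ≤ x)) ≤ 1 := by
    have hsplit : s = s.take 1 ++ s.drop 1 := (List.take_append_drop 1 s).symm
    rw [hsplit, List.countP_append]
    have h0 : (s.drop 1).countP (fun x => decide (m ≤ x)) = 0 := by
      rw [List.countP_eq_zero]
      intro a ha
      rcases List.mem_iff_getElem.mp ha with ⟨k, hk, rfl⟩
      have hk' : 1 + k < s.length := by rw [List.length_drop] at hk; omega
      have hle : (s.drop 1)[k] ≤ s[1] := by
        rw [List.getElem_drop]
        rcases Nat.eq_zero_or_pos k with hk0 | hk0
        · subst hk0; simp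
        · have := hsorted.rel_get_of_lt (a := ⟨1, h1⟩) (b := ⟨1 + k, hk'⟩)
            (by simp [Fin.lt_def]; omega)
          simpa using this
      simp only [decide_eq_true_eq]
      intro hma
      exact absurd (lt_of_le_of_lt (hma.trans hle) hcon) (lt_irrefl m)
    rw [h0, Nat.add_zero]
    calc (s.take 1).countP _ ≤ (s.take 1).length := List.countP_le_length
    _ ≤ 1 := by simp
  have ha : 2 ≤ Multiset.countP (fun x => m ≤ x) (↑s : Multiset ℝ) := by
    rw [sort_coe]
    have hle := Multiset.countP_le_of_le (fun x => m ≤ x) (pair_le_map_univ (t := u) hij)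
    refine le_trans ?_ hle
    have h2 : Multiset.countP (fun x => m ≤ x) ({u i, u j} : Multiset ℝ) = 2 := by
      rw [show ({u i, u j} : Multiset ℝ) = u i ::ₘ u j ::ₘ 0 from rfl,
        Multiset.countP_cons_of_pos _ (min_le_left (u i) (u j)),
        Multiset.countP_cons_of_pos _ (min_le_right (u i) (u j)),
        Multiset.countP_zero]
    omega
  rw [Multiset.coe_countP] at ha
  omega
lemma pair_le_sort (s : List ℝ) (h1 : 1 < s.length) :
    ({s[0], s[1]} : Multiset ℝ) ≤ ↑s := by
  have e : s = s[0] :: s[1] :: s.drop 2 := by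
    conv_lhs => rw [← List.drop_zero (l := s), List.drop_eq_getElem_cons (by omega),
      List.drop_eq_getElem_cons (h := h1)]
  conv_rhs => rw [e]
  rw [show ((s[0] :: s[1] :: s.drop 2 : List ℝ) : Multiset ℝ) = s[0] ::ₘ s[1] ::ₘ ↑(s.drop 2) from rfl]
  exact Multiset.cons_le_cons _ (Multiset.cons_le_cons _ (Multiset.zero_le _))

lemma exists_pair_of_pair_le {n : ℕ} {t : Fin n → ℝ} {a b : ℝ}
    (h : ({a, b} : Multiset ℝ) ≤ Multiset.map t Finset.univ.val) :
    ∃ i j : Fin n, i ≠ j ∧ t i = a ∧ t j = b := by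
  have ha : a ∈ Multiset.map t Finset.univ.val := Multiset.mem_of_le h (by simp)
  rcases Multiset.mem_map.mp ha with ⟨i, _, hia⟩
  have huniv : (Finset.univ.val : Multiset (Fin n)) = i ::ₘ Finset.univ.val.erase i :=
    (Multiset.cons_erase (Finset.mem_univ_val i)).symm
  rw [huniv, Multiset.map_cons, hia] at h
  rw [show ({a, b} : Multiset ℝ) = a ::ₘ {b} from rfl] at h
  have hb : b ∈ Multiset.map t (Finset.univ.val.erase i) := by
    have := (Multiset.cons_le_cons_iff a).mp h
    exact Multiset.singleton_le.mp this
  rcases Multiset.mem_map.mp hb with ⟨j, hj, hjb⟩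
  refine ⟨i, j, ?_, hia, hjb⟩
  intro hij
  subst hij
  exact (Multiset.Nodup.notMem_erase Finset.univ.nodup) hj

lemma kthLargest_bounds {n : ℕ} {t : Fin n → ℝ} (ht : t ∈ cube01 n) (k : ℕ) :
    kthLargest t k ∈ Set.Icc (0:ℝ) 1 := by
  unfold kthLargest
  set s := (List.ofFn t).insertionSort (· ≥ ·) with hs
  by_cases h : k - 1 < s.length
  · rw [List.getD_eq_getElem s 0 h]
    have hmem : s[k-1] ∈ s := List.getElem_mem _
    have hmem' : s[k-1] ∈ List.ofFn t := (List.perm_insertionSort _ _).mem_iff.mp hmem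
    rcases List.mem_ofFn.mp hmem' with ⟨i, hi⟩
    rw [← hi]; exact ht i
  · rw [List.getD_eq_default s 0 (le_of_not_gt h)]
    constructor <;> norm_num

lemma exists_top_two {n : ℕ} (hn : 2 ≤ n) (t : Fin n → ℝ) :
    ∃ i j : Fin n, i ≠ j ∧ max2 t ≤ min (t i) (t j) := by
  set s := (List.ofFn t).insertionSort (· ≥ ·) with hs
  have hlen : s.length = n := sort_length t
  have h1 : 1 < s.length := by omega
  have hpair : ({s[0], s[1]} : Multiset ℝ) ≤ Multiset.map t Finset.univ.val := by
    rw [← sort_coe]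
    exact pair_le_sort s h1
  rcases exists_pair_of_pair_le hpair with ⟨i, j, hij, hi, hj⟩
  refine ⟨i, j, hij, ?_⟩
  have hm2 : max2 t = s[1] := List.getD_eq_getElem s 0 h1
  have h01 : s[1] ≤ s[0] := by
    have := (List.pairwise_insertionSort (· ≥ ·) (List.ofFn t)).rel_get_of_lt
      (a := ⟨0, lt_trans Nat.zero_lt_one h1⟩) (b := ⟨1, h1⟩) (by simp [Fin.lt_def])
    simpa using this
  rw [hm2, hi, hj, le_min_iff]
  exact ⟨h01, le_refl _⟩

/-- the second-largest-entry function is 2-stable on `[0,1]^n` (`n ≥ 2`). -/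
theorem max2_stable {n : ℕ} (hn : 2 ≤ n) : Stable (cube01 n) (max2 (n := n)) 2 := by
  intro t ht α hα D hD hL
  obtain ⟨hD0, hD1⟩ := hD
  set m := max2 t with hm
  have htmem : ∀ R : Finset (Fin n), m ∈ max2 '' {t' ∈ cube01 n | ∀ i ∉ R, t' i = t i} :=
    fun R => ⟨t, ⟨ht, fun i _ => rfl⟩, rfl⟩
  have hm0 : 0 ≤ m := (kthLargest_bounds ht 2).1
  have hm1 : m ≤ 1 := (kthLargest_bounds ht 2).2
  have hcm0 : ∀ R : Finset (Fin n), 0 ≤ corruptMin (cube01 n) max2 R t := by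
    intro R
    apply le_csInf ⟨_, htmem R⟩
    rintro b ⟨u, ⟨hu, _⟩, rfl⟩
    exact (kthLargest_bounds hu 2).1
  obtain ⟨i1, i2, h12, htop⟩ := exists_top_two hn t
  have hgood : ∀ R : Finset (Fin n), i1 ∉ R → i2 ∉ R →
      m ≤ corruptMin (cube01 n) max2 R t := by
    intro R h1 h2
    apply le_csInf ⟨_, htmem R⟩
    rintro b ⟨u, ⟨hu, hueq⟩, rfl⟩
    calc m ≤ min (t i1) (t i2) := htop
    _ = min (u i1) (u i2) := by rw [hueq i1 h1, hueq i2 h2]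
    _ ≤ max2 u := min_le_kthLargest2 u h12
  classical
  set G : Finset (Finset (Fin n)) := Finset.univ.filter (fun R => i1 ∉ R ∧ i2 ∉ R) with hG
  have hPG : 1 - 2 * α ≤ ∑ R ∈ G, D R := by
    have hsplit : ∑ R ∈ G, D R + ∑ R ∈ Finset.univ.filter (fun R => ¬(i1 ∉ R ∧ i2 ∉ R)), D R
        = ∑ R : Finset (Fin n), D R := Finset.sum_filter_add_sum_filter_not _ _ _
    have hbad : ∑ R ∈ Finset.univ.filter (fun R => ¬(i1 ∉ R ∧ i2 ∉ R)), D R ≤ 2 * α := by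
      set A := Finset.univ.filter (fun R : Finset (Fin n) => i1 ∈ R) with hA
      set B := Finset.univ.filter (fun R : Finset (Fin n) => i2 ∈ R) with hB
      have hsub : Finset.univ.filter (fun R : Finset (Fin n) => ¬(i1 ∉ R ∧ i2 ∉ R)) ⊆ A ∪ B := by
        intro R hR
        simp only [hA, hB, Finset.mem_union, Finset.mem_filter, Finset.mem_univ, true_and] at hR ⊢
        tauto
      have h1 : ∑ R ∈ Finset.univ.filter (fun R : Finset (Fin n) => ¬(i1 ∉ R ∧ i2 ∉ R)), D R
          ≤ ∑ R ∈ A ∪ B, D R :=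
        Finset.sum_le_sum_of_subset_of_nonneg hsub (fun R _ _ => hD0 R)
      have h2 : ∑ R ∈ A ∪ B, D R ≤ ∑ R ∈ A, D R + ∑ R ∈ B, D R := by
        have := Finset.sum_union_inter (s₁ := A) (s₂ := B) (f := D)
        have hint : 0 ≤ ∑ R ∈ A ∩ B, D R := Finset.sum_nonneg (fun R _ => hD0 R)
        linarith
      have hAle : ∑ R ∈ A, D R ≤ α := hL i1
      have hBle : ∑ R ∈ B, D R ≤ α := hL i2
      linarith
    linarith [hsplit, hD1]
  have hstep1 : ∑ R ∈ G, D R * m ≤ ∑ R : Finset (Fin n), D R * corruptMin (cube01 n) max2 R t := by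
    calc ∑ R ∈ G, D R * m ≤ ∑ R ∈ G, D R * corruptMin (cube01 n) max2 R t := by
          apply Finset.sum_le_sum
          intro R hR
          simp only [hG, Finset.mem_filter] at hR
          exact mul_le_mul_of_nonneg_left (hgood R hR.2.1 hR.2.2) (hD0 R)
    _ ≤ ∑ R : Finset (Fin n), D R * corruptMin (cube01 n) max2 R t :=
          Finset.sum_le_sum_of_subset_of_nonneg (Finset.subset_univ G)
            (fun R _ _ => mul_nonneg (hD0 R) (hcm0 R))
  have hsum : ∑ R ∈ G, D R * m = (∑ R ∈ G, D R) * m := (Finset.sum_mul _ _ _).symm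
  have hfin : m - α * 2 ≤ (∑ R ∈ G, D R) * m := by
    nlinarith [mul_nonneg (sub_nonneg.mpr hPG) hm0, mul_nonneg (le_of_lt hα.1) (sub_nonneg.mpr hm1)]
  calc max2 t - α * 2 = m - α * 2 := by rw [hm]
  _ ≤ (∑ R ∈ G, D R) * m := hfin
  _ = ∑ R ∈ G, D R * m := hsum.symm
  _ ≤ _ := hstep1
end

section
/- Let G be an undirected graph on n vertices with no self-loops, and let A be the n × n matrix with A_{ii} = 1/2, A_{ij} = A_{ji} = −1 when {i,j} is an edge of G, and A_{ij} = −1/(4n) for distinct non-adjacent i, j. If I ⊆ [n] is an independent set of G of size k ≥ 1 and x ∈ Δ_n is its normalized indicator vector (x_i = 1/k for i ∈ I, else 0), then (Ax)_i ≥ 1/(4n) for every i ∈ I and (Ax)_i < 0 for every i ∉ I. -/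
open Finset

/-- for the independent-set gadget matrix `A(G)`, the normalized
indicator vector `x` of an independent set `I` of size `k ≥ 1` satisfies
`(Ax)ᵢ ≥ 1/(4n)` on `I` and `(Ax)ᵢ < 0` off `I`. -/
theorem indep_set_gadget_from_IS {n : ℕ} (G : SimpleGraph (Fin n)) [DecidableRel G.Adj]
    (I : Finset (Fin n)) (hI : ∀ i ∈ I, ∀ j ∈ I, ¬G.Adj i j)
    (k : ℕ) (hk : 1 ≤ k) (hcard : I.card = k)
    (A : Matrix (Fin n) (Fin n) ℝ)
    (hA : ∀ i j, A i j =
      if i = j then 1 / 2 else if G.Adj i j then -1 else -(1 / (4 * (n : ℝ))))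
    (x : Fin n → ℝ) (hx : ∀ i, x i = if i ∈ I then (k : ℝ)⁻¹ else 0) :
    (∀ i ∈ I, 1 / (4 * (n : ℝ)) ≤ A.mulVec x i) ∧ (∀ i ∉ I, A.mulVec x i < 0) := by
  have hIne : I.Nonempty := Finset.card_pos.mp (hcard ▸ hk)
  have hkn : k ≤ n := by
    have := I.card_le_univ
    simpa [hcard] using this
  have hn : 1 ≤ n := le_trans hk hkn
  have hnR : (1:ℝ) ≤ n := by exact_mod_cast hn
  have hkR : (1:ℝ) ≤ k := by exact_mod_cast hk
  have hknR : (k:ℝ) ≤ n := by exact_mod_cast hkn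
  have hk0 : (0:ℝ) < k := by linarith
  have hn0 : (0:ℝ) < n := by linarith
  have hsum : ∀ i, A.mulVec x i = ∑ j ∈ I, A i j * (k:ℝ)⁻¹ := by
    intro i
    simp only [Matrix.mulVec, dotProduct, hx, mul_ite, mul_zero]
    rw [Finset.sum_ite_mem, Finset.univ_inter]
  constructor
  · intro i hi
    rw [hsum i, ← Finset.add_sum_erase _ _ hi]
    have h1 : A i i = 1/2 := by rw [hA]; simp
    have h2 : ∀ j ∈ I.erase i, A i j * (k:ℝ)⁻¹ = -(1 / (4 * (n : ℝ))) * (k:ℝ)⁻¹ := by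
      intro j hj
      have hji : j ≠ i := Finset.ne_of_mem_erase hj
      have hjI : j ∈ I := Finset.mem_of_mem_erase hj
      rw [hA]
      simp [hji.symm, hI i hi j hjI]
    rw [Finset.sum_congr rfl h2, Finset.sum_const, Finset.card_erase_of_mem hi, hcard]
    have hkm : ((k - 1 : ℕ) : ℝ) = (k:ℝ) - 1 := by
      have : (1:ℕ) ≤ k := hk
      push_cast [this]; ring
    rw [nsmul_eq_mul, hkm, h1]
    have hkne : (k:ℝ) ≠ 0 := ne_of_gt hk0
    have hnne : (n:ℝ) ≠ 0 := ne_of_gt hn0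
    have heq : 1/2 * (k:ℝ)⁻¹ + ((k:ℝ)-1) * (-(1 / (4 * (n:ℝ))) * (k:ℝ)⁻¹)
        = (2*(n:ℝ) - (k:ℝ) + 1) / ((4*(n:ℝ)) * k) := by
      field_simp
      ring
    rw [heq, div_le_div_iff₀ (by positivity) (by positivity)]
    nlinarith
  · intro i hi
    rw [hsum i]
    have hle : ∀ j ∈ I, A i j * (k:ℝ)⁻¹ ≤ -(1 / (4 * (n : ℝ))) * (k:ℝ)⁻¹ := by
      intro j hj
      have hji : i ≠ j := fun h => hi (h ▸ hj)
      rw [hA]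
      simp only [hji, if_false]
      by_cases hadj : G.Adj i j
      · simp only [hadj, if_true]
        apply mul_le_mul_of_nonneg_right _ (by positivity)
        rw [neg_le_neg_iff, div_le_one (by positivity)]; linarith
      · simp [hadj]
    calc ∑ j ∈ I, A i j * (k:ℝ)⁻¹ ≤ ∑ _j ∈ I, -(1 / (4 * (n : ℝ))) * (k:ℝ)⁻¹ :=
          Finset.sum_le_sum hle
    _ = (k:ℝ) * (-(1 / (4 * (n : ℝ))) * (k:ℝ)⁻¹) := by rw [Finset.sum_const, hcard, nsmul_eq_mul]
    _ < 0 := by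
        apply mul_neg_of_pos_of_neg hk0
        apply mul_neg_of_neg_of_pos _ (by positivity)
        simp; positivity
end

section
/- Let G be an undirected graph on n vertices with no self-loops, and let A be the n × n matrix with A_{ii} = 1/2, A_{ij} = A_{ji} = −1 when {i,j} is an edge of G, and A_{ij} = −1/(4n) for distinct non-adjacent i,j. Then for every x ∈ Δ_n, the set {i ∈ [n] : (Ax)_i ≥ 0} is an independent set of G. -/
open Finset

/-- for the independent-set gadget matrix `A(G)` and any `x ∈ Δ_n`,
the set of coordinates where `Ax` is nonnegative forms an independent set of `G`. -/
theorem indep_set_gadget_to_IS {n : ℕ} (G : SimpleGraph (Fin n)) [DecidableRel G.Adj]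
    (A : Matrix (Fin n) (Fin n) ℝ)
    (hA : ∀ i j, A i j =
      if i = j then 1 / 2 else if G.Adj i j then -1 else -(1 / (4 * (n : ℝ))))
    (x : Fin n → ℝ) (hx : x ∈ stdSimplex ℝ (Fin n)) :
    ∀ i j : Fin n, 0 ≤ A.mulVec x i → 0 ≤ A.mulVec x j → ¬G.Adj i j := by
  intro i j hi hj hadj
  have hij : i ≠ j := hadj.ne
  have hn : (0 : ℝ) < n := by
    have := i.pos; exact_mod_cast this
  have hxpos := hx.1
  have hxsum := hx.2
  -- key bound: for adjacent a b, (Ax)_b ≤ x b / 2 - x a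
  have key : ∀ a b : Fin n, G.Adj a b → A.mulVec x b ≤ x b / 2 - x a := by
    intro a b hab
    have hne : a ≠ b := hab.ne
    have hsplit : ∑ k ∈ (univ \ {a, b}), A b k * x k
        + ∑ k ∈ ({a, b} : Finset (Fin n)), A b k * x k
        = ∑ k, A b k * x k :=
      Finset.sum_sdiff (subset_univ _)
    have hpair : ∑ k ∈ ({a, b} : Finset (Fin n)), A b k * x k
        = A b a * x a + A b b * x b := Finset.sum_pair hne
    have hrest : ∑ k ∈ (univ \ {a, b}), A b k * x k ≤ 0 := by
      apply Finset.sum_nonpos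
      intro k hk
      have hkb : k ≠ b := by
        simp only [Finset.mem_sdiff, Finset.mem_insert, Finset.mem_singleton] at hk
        tauto
      have hAle : A b k ≤ 0 := by
        rw [hA]
        rw [if_neg (fun h => hkb h.symm)]
        split
        · norm_num
        · have : 0 < 1 / (4 * (n : ℝ)) := by positivity
          linarith
      exact mul_nonpos_of_nonpos_of_nonneg hAle (hxpos k)
    have hba : A b a = -1 := by
      rw [hA, if_neg (fun h => hne h.symm), if_pos hab.symm]
    have hbb : A b b = 1 / 2 := by rw [hA, if_pos rfl]
    have : A.mulVec x b = ∑ k, A b k * x k := rfl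
    rw [this, ← hsplit, hpair, hba, hbb]
    linarith
  have h1 : x j ≤ x i / 2 := by
    have := key j i hadj.symm; linarith
  have h2 : x i ≤ x j / 2 := by
    have := key i j hadj; linarith
  have hxi : x i = 0 := le_antisymm (by linarith) (hxpos i)
  -- now (Ax)_i < 0, contradiction
  have hsum' : ∑ k ∈ (univ \ {i}), x k = 1 := by
    have : ∑ k ∈ (univ \ {i}), x k + ∑ k ∈ ({i} : Finset (Fin n)), x k = ∑ k, x k :=
      Finset.sum_sdiff (subset_univ _)
    rw [Finset.sum_singleton, hxi, hxsum] at this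
    linarith
  have hbound : A.mulVec x i ≤ -(1 / (4 * (n : ℝ))) := by
    have hsplit : ∑ k ∈ (univ \ {i}), A i k * x k
        + ∑ k ∈ ({i} : Finset (Fin n)), A i k * x k
        = ∑ k, A i k * x k :=
      Finset.sum_sdiff (subset_univ _)
    have hstep : ∑ k ∈ (univ \ {i}), A i k * x k
        ≤ ∑ k ∈ (univ \ {i}), -(1 / (4 * (n : ℝ))) * x k := by
      apply Finset.sum_le_sum
      intro k hk
      have hki : k ≠ i := by
        simp only [Finset.mem_sdiff, Finset.mem_singleton] at hk; tauto
      have hAle : A i k ≤ -(1 / (4 * (n : ℝ))) := by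
        rw [hA, if_neg (fun h => hki h.symm)]
        split
        · have h4 : (1:ℝ) ≤ 4 * (n:ℝ) := by
            have : (1:ℝ) ≤ (n:ℝ) := by exact_mod_cast i.pos
            linarith
          have : 1 / (4 * (n : ℝ)) ≤ 1 := by
            rw [div_le_one (by linarith)]; linarith
          linarith
        · exact le_rfl
      exact mul_le_mul_of_nonneg_right hAle (hxpos k)
    have hval : ∑ k ∈ (univ \ {i}), -(1 / (4 * (n : ℝ))) * x k
        = -(1 / (4 * (n : ℝ))) := by
      rw [← Finset.mul_sum, hsum', mul_one]
    have : A.mulVec x i = ∑ k, A i k * x k := rfl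
    rw [this, ← hsplit, Finset.sum_singleton, hxi, mul_zero, add_zero]
    linarith
  have : 0 < 1 / (4 * (n : ℝ)) := by positivity
  linarith
end
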